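/- arXiv:2412.05509 — 9 statements merged into one kernel-verified Lean document; each statement's English description precedes it below -/
import Mathlib

section
/- Let X be a separable complex Banach space, T : X → X a continuous linear operator, D ⊆ X a dense subset, S : X → X a map with S(D) ⊆ D, and (n_k) a strictly increasing sequence of natural numbers such that for every x ∈ D one has T^{n_k}x → 0 and S^{n_k}x → 0 as k → ∞, and T(Sx) = x. Then T is hypercyclic, i.e. there exists x ∈ X whose orbit {T^n x : n ∈ ℕ} is dense in X. Moreover, if these hypotheses hold with n_k = k for all k (i.e. T^n x → 0 and S^n x → 0 for every x ∈ D), then T is topologically mixing: for any two nonempty open sets U, V ⊆ X there exists N ∈ ℕ such that T^n(U) ∩ V ≠ ∅ for all n ≥ N. -/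
open Filter Topology

private lemma gs_pow_iterate {X : Type*} [NormedAddCommGroup X] [NormedSpace ℂ X]
    (T : X →L[ℂ] X) (D : Set X) (S : X → X) (hSD : Set.MapsTo S D D)
    (hTS : ∀ x ∈ D, T (S x) = x) :
    ∀ n : ℕ, ∀ x ∈ D, (T ^ n) (S^[n] x) = x := by
  intro n
  induction n with
  | zero => intro x _; simp
  | succ n ih =>
    intro x hx
    rw [Function.iterate_succ_apply', pow_succ, ContinuousLinearMap.mul_apply,
      hTS _ (hSD.iterate n hx), ih x hx]

private lemma gs_transitive {X : Type*} [NormedAddCommGroup X] [NormedSpace ℂ X]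
    (T : X →L[ℂ] X) (D : Set X) (hD : Dense D)
    (S : X → X) (hSD : Set.MapsTo S D D)
    (m : ℕ → ℕ)
    (hT0 : ∀ x ∈ D, Tendsto (fun k : ℕ => (T ^ m k) x) atTop (𝓝 0))
    (hS0 : ∀ x ∈ D, Tendsto (fun k : ℕ => S^[m k] x) atTop (𝓝 0))
    (hTS : ∀ x ∈ D, T (S x) = x)
    (U V : Set X) (hU : IsOpen U) (hV : IsOpen V) (hUne : U.Nonempty) (hVne : V.Nonempty) :
    ∀ᶠ k in atTop, ((T ^ m k) '' U ∩ V).Nonempty := by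
  obtain ⟨u, huD, huU⟩ := hD.exists_mem_open hU hUne
  obtain ⟨v, hvD, hvV⟩ := hD.exists_mem_open hV hVne
  have h1 : Tendsto (fun k : ℕ => u + S^[m k] v) atTop (𝓝 u) := by
    have := (tendsto_const_nhds (x := u) (f := atTop (α := ℕ))).add (hS0 v hvD)
    simpa using this
  have h2 : Tendsto (fun k : ℕ => (T ^ m k) (u + S^[m k] v)) atTop (𝓝 v) := by
    have heq : ∀ k : ℕ, (T ^ m k) (u + S^[m k] v) = (T ^ m k) u + v := by
      intro k
      rw [map_add, gs_pow_iterate T D S hSD hTS (m k) v hvD]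
    simp only [heq]
    have := (hT0 u huD).add (tendsto_const_nhds (x := v) (f := atTop (α := ℕ)))
    simpa using this
  filter_upwards [h1.eventually (hU.mem_nhds huU), h2.eventually (hV.mem_nhds hvV)]
    with k hkU hkV
  exact ⟨(T ^ m k) (u + S^[m k] v), ⟨u + S^[m k] v, hkU, rfl⟩, hkV⟩

/-- **Gethner–Shapiro criterion.** If `T` is a continuous linear operator on a separable
complex Banach space `X`, `D ⊆ X` is dense, `S` maps `D` into `D`, and along a strictly
increasing sequence `(n_k)` one has `T^{n_k}x → 0`, `S^{n_k}x → 0` and `T(Sx) = x` for all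
`x ∈ D`, then `T` is hypercyclic.  Moreover, if the hypotheses hold with `n_k = k`
(i.e. `T^n x → 0` and `S^n x → 0` for every `x ∈ D`), then `T` is topologically mixing. -/
theorem gethner_shapiro_criterion
    {X : Type*} [NormedAddCommGroup X] [NormedSpace ℂ X] [CompleteSpace X]
    [TopologicalSpace.SeparableSpace X]
    (T : X →L[ℂ] X) (D : Set X) (hD : Dense D)
    (S : X → X) (hSD : Set.MapsTo S D D)
    (nk : ℕ → ℕ) (hnk : StrictMono nk)
    (hT0 : ∀ x ∈ D, Tendsto (fun k : ℕ => (T ^ nk k) x) atTop (𝓝 0))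
    (hS0 : ∀ x ∈ D, Tendsto (fun k : ℕ => S^[nk k] x) atTop (𝓝 0))
    (hTS : ∀ x ∈ D, T (S x) = x) :
    (∃ x : X, Dense (Set.range fun n : ℕ => (T ^ n) x)) ∧
    ((∀ x ∈ D, Tendsto (fun n : ℕ => (T ^ n) x) atTop (𝓝 0)) →
      (∀ x ∈ D, Tendsto (fun n : ℕ => S^[n] x) atTop (𝓝 0)) →
      ∀ U V : Set X, IsOpen U → IsOpen V → U.Nonempty → V.Nonempty →
        ∃ N : ℕ, ∀ n ≥ N, ((T ^ n) '' U ∩ V).Nonempty) := by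
  constructor
  · -- hypercyclicity via Baire category
    have : SecondCountableTopology X := inferInstance
    obtain ⟨b, hbc, hbne, hbasis⟩ := TopologicalSpace.exists_countable_basis X
    -- For each V ∈ b, the set of x hitting V is open dense
    have key : ∀ V ∈ b, IsOpen (⋃ n : ℕ, (T ^ n) ⁻¹' V) ∧
        Dense (⋃ n : ℕ, (T ^ n) ⁻¹' V) := by
      intro V hV
      have hVo : IsOpen V := hbasis.isOpen hV
      have hVne : V.Nonempty := Set.nonempty_iff_ne_empty.2 (fun h => hbne (h ▸ hV))
      refine ⟨isOpen_iUnion fun n => hVo.preimage (T ^ n).continuous, ?_⟩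
      rw [dense_iff_inter_open]
      intro U hU hUne
      have := (gs_transitive T D hD S hSD nk hT0 hS0 hTS U V hU hVo hUne hVne).exists
      obtain ⟨k, y, ⟨x, hxU, rfl⟩, hyV⟩ := this
      exact ⟨x, hxU, Set.mem_iUnion.2 ⟨nk k, hyV⟩⟩
    have hdense : Dense (⋂ V ∈ b, ⋃ n : ℕ, (T ^ n) ⁻¹' V) :=
      dense_biInter_of_isOpen (fun V hV => (key V hV).1) hbc (fun V hV => (key V hV).2)
    obtain ⟨x, hx⟩ := hdense.nonempty
    refine ⟨x, hbasis.dense_iff.2 fun o ho hone => ?_⟩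
    have := Set.mem_iInter₂.1 hx o ho
    obtain ⟨n, hn⟩ := Set.mem_iUnion.1 this
    exact ⟨(T ^ n) x, hn, ⟨n, rfl⟩⟩
  · -- topological mixing
    intro hT0' hS0' U V hU hV hUne hVne
    have := gs_transitive T D hD S hSD id hT0' hS0' hTS U V hU hV hUne hVne
    simpa using eventually_atTop.1 this
end

section
/- Let X be a separable complex Banach space, T : X → X a continuous linear operator, D ⊆ X a dense subset, and S : X → X a map with S(D) ⊆ D such that for every x ∈ D: the family (T^n x)_{n ≥ 0} is summable in X, the family (S^n x)_{n ≥ 0} is summable in X, and T(Sx) = x. Then T is topologically mixing and chaotic; in particular T is hypercyclic (some vector has dense orbit) and the set of periodic points {v ∈ X : T^m v = v for some m ≥ 1} is dense in X. -/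
open Filter Topology

lemma subseries_norm_le_aux {X : Type*} [NormedAddCommGroup X] [CompleteSpace X]
    {f : ℕ → X} (hf : Summable f) {ε : ℝ} (hε : 0 < ε) :
    ∃ N : ℕ, ∀ φ : ℕ → ℕ, Function.Injective φ → (∀ j, N ≤ φ j) →
      ‖∑' j, f (φ j)‖ ≤ ε := by
  obtain ⟨s, hs⟩ := summable_iff_vanishing.mp hf (Metric.ball 0 ε) (Metric.ball_mem_nhds 0 hε)
  refine ⟨s.sup id + 1, fun φ hφinj hφge => ?_⟩
  have hg : Summable fun j => f (φ j) := hf.comp_injective hφinj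
  refine le_of_tendsto ((continuous_norm.tendsto _).comp hg.hasSum) ?_
  refine Eventually.of_forall fun t => ?_
  have himg : ∑ n ∈ t.image φ, f n = ∑ j ∈ t, f (φ j) :=
    Finset.sum_image (fun a _ b _ h => hφinj h)
  have hdisj : Disjoint (t.image φ) s := by
    rw [Finset.disjoint_left]
    rintro n hn hns
    obtain ⟨j, _, rfl⟩ := Finset.mem_image.mp hn
    have h1 : φ j ≤ s.sup id := Finset.le_sup (f := id) hns
    have := hφge j
    omega
  have := hs (t.image φ) hdisj
  rw [himg] at this
  exact le_of_lt (mem_ball_zero_iff.mp this)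

/-- **Chaoticity criterion.** If `T` is a continuous linear operator on a separable complex
Banach space `X`, `D ⊆ X` is dense, `S` maps `D` into `D`, and for every `x ∈ D` the families
`(T^n x)` and `(S^n x)` are summable (unconditionally convergent series) and `T(Sx) = x`,
then `T` is topologically mixing and chaotic: `T` has a dense orbit and its periodic points
are dense. -/
theorem chaoticity_criterion
    {X : Type*} [NormedAddCommGroup X] [NormedSpace ℂ X] [CompleteSpace X]
    [TopologicalSpace.SeparableSpace X]
    (T : X →L[ℂ] X) (D : Set X) (hD : Dense D)
    (S : X → X) (hSD : Set.MapsTo S D D)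
    (hT : ∀ x ∈ D, Summable fun n : ℕ => (T ^ n) x)
    (hS : ∀ x ∈ D, Summable fun n : ℕ => S^[n] x)
    (hTS : ∀ x ∈ D, T (S x) = x) :
    (∀ U V : Set X, IsOpen U → IsOpen V → U.Nonempty → V.Nonempty →
        ∃ N : ℕ, ∀ n ≥ N, ((T ^ n) '' U ∩ V).Nonempty) ∧
    (∃ x : X, Dense (Set.range fun n : ℕ => (T ^ n) x)) ∧
    Dense {v : X | ∃ m : ℕ, 1 ≤ m ∧ (T ^ m) v = v} := by
  have hDiter : ∀ n : ℕ, Set.MapsTo S^[n] D D := fun n => hSD.iterate n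
  have key : ∀ n : ℕ, ∀ x ∈ D, (T ^ n) (S^[n] x) = x := by
    intro n
    induction n with
    | zero => intro x hx; simp
    | succ n ih =>
      intro x hx
      have hd : S^[n] x ∈ D := hDiter n hx
      rw [Function.iterate_succ_apply', pow_succ, ContinuousLinearMap.mul_apply,
        hTS _ hd, ih x hx]
  -- Mixing
  have mixing : ∀ U V : Set X, IsOpen U → IsOpen V → U.Nonempty → V.Nonempty →
      ∃ N : ℕ, ∀ n ≥ N, ((T ^ n) '' U ∩ V).Nonempty := by
    intro U V hU hV hUne hVne
    obtain ⟨x, hxD, hxU⟩ := hD.exists_mem_open hU hUne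
    obtain ⟨y, hyD, hyV⟩ := hD.exists_mem_open hV hVne
    have hx0 : Tendsto (fun n => S^[n] y) atTop (𝓝 0) := (hS y hyD).tendsto_atTop_zero
    have h1 : Tendsto (fun n => x + S^[n] y) atTop (𝓝 x) := by
      simpa using tendsto_const_nhds.add hx0
    have h2 : Tendsto (fun n => (T ^ n) x + y) atTop (𝓝 y) := by
      simpa using ((hT x hxD).tendsto_atTop_zero).add tendsto_const_nhds
    have e1 : ∀ᶠ n in atTop, x + S^[n] y ∈ U := h1.eventually (hU.eventually_mem hxU)
    have e2 : ∀ᶠ n in atTop, (T ^ n) x + y ∈ V := h2.eventually (hV.eventually_mem hyV)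
    obtain ⟨N, hN⟩ := eventually_atTop.mp (e1.and e2)
    refine ⟨N, fun n hn => ?_⟩
    obtain ⟨hnU, hnV⟩ := hN n hn
    refine ⟨(T ^ n) (x + S^[n] y), ⟨_, hnU, rfl⟩, ?_⟩
    rw [map_add, key n y hyD]
    exact hnV
  refine ⟨mixing, ?_, ?_⟩
  -- Hypercyclicity via Baire
  · obtain ⟨b, hbc, hbne, hbasis⟩ := TopologicalSpace.exists_countable_basis X
    haveI : Countable b := hbc.to_subtype
    have hGopen : ∀ V : b, IsOpen (⋃ n : ℕ, (T ^ n) ⁻¹' (V : Set X)) := fun V =>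
      isOpen_iUnion fun n => (hbasis.isOpen V.2).preimage (T ^ n).continuous
    have hGdense : ∀ V : b, Dense (⋃ n : ℕ, (T ^ n) ⁻¹' (V : Set X)) := by
      intro V
      rw [dense_iff_inter_open]
      intro U hU hUne
      have hVo : IsOpen (V : Set X) := hbasis.isOpen V.2
      have hVne : (V : Set X).Nonempty := by
        rcases Set.eq_empty_or_nonempty (V : Set X) with h | h
        · exact absurd (h ▸ V.2) hbne
        · exact h
      obtain ⟨N, hN⟩ := mixing U V hU hVo hUne hVne
      obtain ⟨y, ⟨u, huU, rfl⟩, hyV⟩ := hN N le_rfl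
      exact ⟨u, huU, Set.mem_iUnion.mpr ⟨N, hyV⟩⟩
    obtain ⟨x, hx⟩ := (dense_iInter_of_isOpen hGopen hGdense).nonempty
    refine ⟨x, hbasis.dense_iff.mpr fun o ho hone => ?_⟩
    obtain ⟨n, hn⟩ := Set.mem_iUnion.mp (Set.mem_iInter.mp hx ⟨o, ho⟩)
    exact ⟨(T ^ n) x, hn, ⟨n, rfl⟩⟩
  -- Dense periodic points
  · rw [dense_iff_inter_open]
    intro W hW hWne
    obtain ⟨x, hxD, hxW⟩ := hD.exists_mem_open hW hWne
    obtain ⟨ε, hε, hball⟩ := Metric.isOpen_iff.mp hW x hxW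
    have hε3 : (0 : ℝ) < ε / 3 := by linarith
    obtain ⟨N₁, hN₁⟩ := subseries_norm_le_aux (hT x hxD) hε3
    obtain ⟨N₂, hN₂⟩ := subseries_norm_le_aux (hS x hxD) hε3
    set m : ℕ := max (max N₁ N₂) 1 with hm
    have hm1 : 1 ≤ m := le_max_right _ _
    have hsm : StrictMono fun j : ℕ => (j + 1) * m := by
      intro a b h
      exact (Nat.mul_lt_mul_right (show 0 < m by omega)).mpr (by omega)
    have hsm0 : StrictMono fun j : ℕ => j * m := by
      intro a b h
      exact (Nat.mul_lt_mul_right (show 0 < m by omega)).mpr h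
    have hge : ∀ j : ℕ, m ≤ (j + 1) * m := fun j => Nat.le_mul_of_pos_left m (by omega)
    have hge1 : ∀ j : ℕ, N₁ ≤ (j + 1) * m := fun j =>
      le_trans (le_trans (le_max_left _ _) (le_max_left _ _)) (hge j)
    have hge2 : ∀ j : ℕ, N₂ ≤ (j + 1) * m := fun j =>
      le_trans (le_trans (le_max_right _ _) (le_max_left _ _)) (hge j)
    set f : ℕ → X := fun n => (T ^ n) x with hf
    set g : ℕ → X := fun n => S^[n] x with hg
    have hfs : Summable f := hT x hxD
    have hgs : Summable g := hS x hxD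
    have hA : Summable fun j : ℕ => f ((j + 1) * m) := hfs.comp_injective hsm.injective
    have hB : Summable fun j : ℕ => g ((j + 1) * m) := hgs.comp_injective hsm.injective
    set A : X := ∑' j : ℕ, f ((j + 1) * m) with hAdef
    set B : X := ∑' j : ℕ, g ((j + 1) * m) with hBdef
    set v : X := x + A + B with hv
    have hTA : (T ^ m) A = ∑' j : ℕ, f ((j + 2) * m) := by
      rw [hAdef, ContinuousLinearMap.map_tsum _ hA]
      congr 1
      funext j
      show (T ^ m) ((T ^ ((j + 1) * m)) x) = (T ^ ((j + 2) * m)) x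
      rw [← ContinuousLinearMap.mul_apply, ← pow_add]
      congr 2
      ring
    have hAsplit : A = f m + ∑' j : ℕ, f ((j + 2) * m) := by
      have h := Summable.tsum_eq_zero_add hA
      have e0 : (0 + 1) * m = m := by ring
      have e1 : ∀ j : ℕ, (j + 1 + 1) * m = (j + 2) * m := fun j => by ring
      simp only [e0, e1] at h
      rw [hAdef]
      exact h
    have hTB : (T ^ m) B = ∑' j : ℕ, g (j * m) := by
      rw [hBdef, ContinuousLinearMap.map_tsum _ hB]
      congr 1
      funext j
      show (T ^ m) (S^[(j + 1) * m] x) = S^[j * m] x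
      have : (j + 1) * m = m + j * m := by ring
      rw [this, Function.iterate_add_apply]
      exact key m _ (hDiter (j * m) hxD)
    have hgs0 : Summable fun j : ℕ => g (j * m) := hgs.comp_injective hsm0.injective
    have hBsplit : (∑' j : ℕ, g (j * m)) = x + B := by
      have h := Summable.tsum_eq_zero_add hgs0
      have h0 : g (0 * m) = x := by simp [hg]
      rw [h0] at h
      rw [hBdef]
      exact h
    have hper : (T ^ m) v = v := by
      rw [hv, map_add, map_add, hTA, hTB, hBsplit]
      have hfm : (T ^ m) x = f m := rfl
      rw [hfm, hAsplit]
      abel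
    have hnormA : ‖A‖ ≤ ε / 3 := hN₁ _ hsm.injective hge1
    have hnormB : ‖B‖ ≤ ε / 3 := hN₂ _ hsm.injective hge2
    have hdist : dist v x < ε := by
      rw [dist_eq_norm]
      have : v - x = A + B := by rw [hv]; abel
      rw [this]
      calc ‖A + B‖ ≤ ‖A‖ + ‖B‖ := norm_add_le _ _
        _ ≤ ε / 3 + ε / 3 := add_le_add hnormA hnormB
        _ < ε := by linarith
    exact ⟨v, hball hdist, ⟨m, hm1, hper⟩⟩
end

section
/- Let E be a complex Banach space, r > 0, and J : E → (ℂ → ℂ) a linear map such that for every f ∈ E the function J f is analytic on the open disc B(0,r) ⊆ ℂ, and such that for every z ∈ B(0,r) the evaluation functional f ↦ (J f)(z) is continuous on E. Then for every n ≥ 0 the Taylor-coefficient functional k_n : E → ℂ, k_n(f) = (J f)^{(n)}(0)/n!, is a continuous (bounded) linear functional on E. -/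
open Filter Topology

open Metric NNReal in
/-- Let `E` be a complex Banach space, `r > 0`, and `J : E → (ℂ → ℂ)` a linear map such that
`J f` is analytic on the open disc `B(0,r)` for every `f ∈ E` and all point evaluations
`f ↦ (J f)(z)`, `z ∈ B(0,r)`, are continuous.  Then for each `n ≥ 0` the Taylor-coefficient
functional `k_n(f) = (J f)^{(n)}(0)/n!` is a continuous linear functional on `E`. -/
theorem taylor_coefficient_functional_continuous
    {E : Type*} [NormedAddCommGroup E] [NormedSpace ℂ E] [CompleteSpace E]
    (r : ℝ) (hr : 0 < r) (J : E →ₗ[ℂ] (ℂ → ℂ))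
    (hJa : ∀ f : E, ∀ z ∈ Metric.ball (0 : ℂ) r, AnalyticAt ℂ (J f) z)
    (hJc : ∀ z ∈ Metric.ball (0 : ℂ) r, Continuous fun f : E => J f z)
    (n : ℕ) :
    ∃ K : E →L[ℂ] ℂ, ∀ f : E,
      K f = iteratedDeriv n (J f) 0 / (n.factorial : ℂ) := by
  have hh : (0:ℝ) < r / 2 := half_pos hr
  set ρ : ℝ≥0 := ⟨r / 2, hh.le⟩ with hρdef
  have hρpos : (0:ℝ) < ρ := hh
  have hρlt : (ρ : ℝ) < r := by
    show r / 2 < r; linarith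
  have hsub : Metric.closedBall (0:ℂ) ρ ⊆ Metric.ball (0:ℂ) r :=
    Metric.closedBall_subset_ball hρlt
  -- power series representation on the ball of radius ρ
  have hps : ∀ f : E, HasFPowerSeriesOnBall (J f) (cauchyPowerSeries (J f) 0 ρ) 0 ρ := by
    intro f
    refine DiffContOnCl.hasFPowerSeriesOnBall ⟨?_, ?_⟩ hρpos
    · exact fun z hz => ((hJa f z (hsub (Metric.ball_subset_closedBall hz))).differentiableAt).differentiableWithinAt
    · rw [closure_ball _ (ne_of_gt hρpos)]
      exact fun z hz => ((hJa f z (hsub hz)).continuousAt).continuousWithinAt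
  -- the Cauchy integral representation of the n-th Taylor coefficient
  have hrep : ∀ f : E, iteratedDeriv n (J f) 0 / (n.factorial : ℂ) =
      (2 * Real.pi * Complex.I : ℂ)⁻¹ • ∮ z in C(0, (ρ:ℝ)), z⁻¹ ^ n • z⁻¹ • J f z := by
    intro f
    have h1 : (n.factorial : ℂ) • (cauchyPowerSeries (J f) 0 ρ n fun _ => (1:ℂ))
        = iteratedFDeriv ℂ n (J f) 0 (fun _ => (1:ℂ)) := by
      have := (hps f).factorial_smul (1:ℂ) n
      simpa [nsmul_eq_mul] using this
    have h2 : iteratedDeriv n (J f) 0 = iteratedFDeriv ℂ n (J f) 0 (fun _ => (1:ℂ)) :=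
      iteratedDeriv_eq_iteratedFDeriv ..
    have h3 := cauchyPowerSeries_apply (J f) 0 (ρ:ℝ) n 1
    rw [h2, ← h1, smul_eq_mul,
      mul_div_cancel_left₀ _ (by exact_mod_cast n.factorial_ne_zero : (n.factorial:ℂ) ≠ 0), h3]
    simp [one_div]
  -- evaluation functionals on the sphere
  have hsph : ∀ z : ℂ, z ∈ Metric.sphere (0:ℂ) (ρ:ℝ) → z ∈ Metric.ball (0:ℂ) r :=
    fun z hz => hsub (Metric.sphere_subset_closedBall hz)
  have hzne : ∀ z : ℂ, z ∈ Metric.sphere (0:ℂ) (ρ:ℝ) → z ≠ 0 := by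
    intro z hz h0
    rw [mem_sphere_zero_iff_norm] at hz
    rw [h0] at hz; simp at hz; exact hρpos.ne' hz.symm
  let e : Metric.sphere (0:ℂ) (ρ:ℝ) → E →L[ℂ] ℂ := fun z =>
    { toFun := fun f => J f z
      map_add' := fun f g => by simp
      map_smul' := fun c f => by simp
      cont := hJc z (hsph z z.2) }
  -- Banach–Steinhaus: uniform bound on the evaluations
  obtain ⟨C, hC⟩ : ∃ C, ∀ z : Metric.sphere (0:ℂ) (ρ:ℝ), ‖e z‖ ≤ C := by
    apply banach_steinhaus
    intro f
    obtain ⟨C, hC⟩ := (isCompact_sphere (0:ℂ) (ρ:ℝ)).exists_bound_of_continuousOn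
      (fun z hz => ((hJa f z (hsph z hz)).continuousAt).continuousWithinAt)
    exact ⟨C, fun z => hC z z.2⟩
  -- integrability of the Cauchy kernel times J f
  have hint : ∀ f : E, CircleIntegrable (fun z => z⁻¹ ^ n • z⁻¹ • J f z) 0 (ρ:ℝ) := by
    intro f
    apply ContinuousOn.circleIntegrable hρpos.le
    intro z hz
    exact ((((continuousAt_id).inv₀ (hzne z hz)).pow n).smul
      (((continuousAt_id).inv₀ (hzne z hz)).smul
        ((hJa f z (hsph z hz)).continuousAt))).continuousWithinAt
  -- the underlying linear functional
  let g : E →ₗ[ℂ] ℂ :=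
    { toFun := fun f => (2 * Real.pi * Complex.I : ℂ)⁻¹ • ∮ z in C(0, (ρ:ℝ)), z⁻¹ ^ n • z⁻¹ • J f z
      map_add' := by
        intro f₁ f₂
        have h : (fun z : ℂ => z⁻¹ ^ n • z⁻¹ • J (f₁ + f₂) z)
            = fun z => z⁻¹ ^ n • z⁻¹ • J f₁ z + z⁻¹ ^ n • z⁻¹ • J f₂ z := by
          funext z; simp only [map_add, Pi.add_apply, smul_add]
        simp only [h]
        have hadd : (∮ z in C(0, (ρ:ℝ)), (z⁻¹ ^ n • z⁻¹ • J f₁ z + z⁻¹ ^ n • z⁻¹ • J f₂ z))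
            = (∮ z in C(0, (ρ:ℝ)), z⁻¹ ^ n • z⁻¹ • J f₁ z)
              + ∮ z in C(0, (ρ:ℝ)), z⁻¹ ^ n • z⁻¹ • J f₂ z := by
          simp only [circleIntegral, smul_add,
            intervalIntegral.integral_add (hint f₁).out (hint f₂).out]
        rw [hadd, smul_add]
      map_smul' := by
        intro c f
        have h : (fun z : ℂ => z⁻¹ ^ n • z⁻¹ • J (c • f) z)
            = fun z => c • (z⁻¹ ^ n • z⁻¹ • J f z) := by
          funext z
          simp only [map_smul, Pi.smul_apply, smul_eq_mul]
          ring
        simp only [h]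
        rw [circleIntegral.integral_smul, smul_comm]
        rfl }
  -- boundedness
  have hbound : ∀ f : E, ‖g f‖ ≤
      (‖(2 * Real.pi * Complex.I : ℂ)⁻¹‖ * (2 * Real.pi * (ρ:ℝ) * ((ρ:ℝ)⁻¹ ^ n * (ρ:ℝ)⁻¹ * C))) * ‖f‖ := by
    intro f
    have hpt : ∀ z ∈ Metric.sphere (0:ℂ) (ρ:ℝ),
        ‖z⁻¹ ^ n • z⁻¹ • J f z‖ ≤ (ρ:ℝ)⁻¹ ^ n * (ρ:ℝ)⁻¹ * (C * ‖f‖) := by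
      intro z hz
      have hnz : ‖z‖ = (ρ:ℝ) := mem_sphere_zero_iff_norm.mp hz
      have h1 : ‖J f z‖ ≤ C * ‖f‖ := by
        calc ‖J f z‖ = ‖e ⟨z, hz⟩ f‖ := rfl
          _ ≤ ‖e ⟨z, hz⟩‖ * ‖f‖ := (e ⟨z, hz⟩).le_opNorm f
          _ ≤ C * ‖f‖ := mul_le_mul_of_nonneg_right (hC ⟨z, hz⟩) (norm_nonneg f)
      rw [norm_smul, norm_smul, norm_pow, norm_inv, hnz, ← mul_assoc]
      exact mul_le_mul_of_nonneg_left h1 (by positivity)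
    have h2 : ‖∮ z in C(0, (ρ:ℝ)), z⁻¹ ^ n • z⁻¹ • J f z‖ ≤
        2 * Real.pi * (ρ:ℝ) * ((ρ:ℝ)⁻¹ ^ n * (ρ:ℝ)⁻¹ * (C * ‖f‖)) :=
      by simpa [abs_of_nonneg hρpos.le] using
        circleIntegral.norm_integral_le_of_norm_le_const hρpos.le hpt
    calc ‖g f‖ = ‖(2 * Real.pi * Complex.I : ℂ)⁻¹‖ * ‖∮ z in C(0, (ρ:ℝ)), z⁻¹ ^ n • z⁻¹ • J f z‖ := by
          rw [show g f = (2 * Real.pi * Complex.I : ℂ)⁻¹ • ∮ z in C(0, (ρ:ℝ)), z⁻¹ ^ n • z⁻¹ • J f z from rfl,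
            norm_smul]
      _ ≤ ‖(2 * Real.pi * Complex.I : ℂ)⁻¹‖ * (2 * Real.pi * (ρ:ℝ) * ((ρ:ℝ)⁻¹ ^ n * (ρ:ℝ)⁻¹ * (C * ‖f‖))) :=
          mul_le_mul_of_nonneg_left h2 (norm_nonneg _)
      _ = (‖(2 * Real.pi * Complex.I : ℂ)⁻¹‖ * (2 * Real.pi * (ρ:ℝ) * ((ρ:ℝ)⁻¹ ^ n * (ρ:ℝ)⁻¹ * C))) * ‖f‖ := by
          ring
  refine ⟨LinearMap.mkContinuous g _ hbound, fun f => ?_⟩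
  show g f = _
  exact (hrep f).symm
end

section
/- Fix 1 ≤ p < ∞ and sequences a, b, w : ℕ → ℂ with a_n ≠ 0 and b_n ≠ 0 for all n, and set c_n := w_{n+1} b_n/a_{n+2} − w_n a_n b_{n+1}/(a_{n+1} a_{n+2}). Assume β₁' := sup_n |w_n a_n/a_{n+1}| < ∞, β₁'' := sup_n |c_n| < ∞, and β₂ := ∑_{n=3}^∞ sup_{j ≥ 0} ( |c_j| ∏_{k=3}^n |b_{j+k−1}/a_{j+k}| ) < ∞. Then there exists a continuous linear operator T on X = ℓ^p(ℕ) which represents the weighted forward shift F_w, i.e. for all n, m: (T e_n)_{n+1} = w_n a_n/a_{n+1}; (T e_n)_m = (−1)^{m−n} c_n ∏_{k=0}^{m−n−3} b_{n+2+k}/a_{n+3+k} for m ≥ n+2 (empty product = 1); and (T e_n)_m = 0 for m ≤ n. Moreover ‖T‖ ≤ β₁' + β₁'' + β₂. -/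
open Filter Finset Topology
open scoped ENNReal NNReal

noncomputable section

/-- The auxiliary sequence `c_n = w_{n+1} b_n/a_{n+2} − w_n a_n b_{n+1}/(a_{n+1} a_{n+2})`. -/
def cseq (a b w : ℕ → ℂ) (n : ℕ) : ℂ :=
  w (n + 1) * b n / a (n + 2) - w n * a n * b (n + 1) / (a (n + 1) * a (n + 2))

/-- `T` represents the weighted forward shift `F_w` on `ℓ^p_{a,b}`, transported to
`ℓ^p(ℕ)` via the basis `f_n(z) = (a_n + b_n z) z^n`:  the matrix of `T` in the standard
unit vectors `e_n` has `w_n a_n/a_{n+1}` on the first subdiagonal, the entries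
`(−1)^{m−n} c_n ∏_{k=0}^{m−n−3} b_{n+2+k}/a_{n+3+k}` for `m ≥ n+2`, and zeros on and
above the diagonal. -/
def RepresentsFw (p : ℝ≥0∞) [Fact (1 ≤ p)] (a b w : ℕ → ℂ)
    (T : lp (fun _ : ℕ => ℂ) p →L[ℂ] lp (fun _ : ℕ => ℂ) p) : Prop :=
  (∀ n : ℕ, (T (lp.single p n 1) : ∀ _ : ℕ, ℂ) (n + 1) = w n * a n / a (n + 1)) ∧
  (∀ n m : ℕ, n + 2 ≤ m →
    (T (lp.single p n 1) : ∀ _ : ℕ, ℂ) m =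
      (-1 : ℂ) ^ (m - n) * cseq a b w n *
        ∏ k ∈ Finset.range (m - n - 2), b (n + 2 + k) / a (n + 3 + k)) ∧
  (∀ n m : ℕ, m ≤ n → (T (lp.single p n 1) : ∀ _ : ℕ, ℂ) m = 0)

namespace FwAux

/-- shift a sequence forward by `d`, multiplying by weights `v`. -/
def shiftFun (d : ℕ) (v : ℕ → ℂ) (x : ℕ → ℂ) (k : ℕ) : ℂ :=
  if d ≤ k then v (k - d) * x (k - d) else 0

lemma shiftFun_apply_add (d : ℕ) (v x : ℕ → ℂ) (n : ℕ) :
    shiftFun d v x (n + d) = v n * x n := by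
  simp [shiftFun]

lemma shiftFun_eq_zero {d k : ℕ} (v x : ℕ → ℂ) (hk : k ∉ Set.range (· + d)) :
    shiftFun d v x k = 0 := by
  rw [shiftFun, if_neg]
  intro h
  exact hk ⟨k - d, show k - d + d = k from Nat.sub_add_cancel h⟩

variable {p : ℝ≥0∞} [Fact (1 ≤ p)]

omit [Fact (1 ≤ p)] in
lemma shift_summable (hp : 0 < p.toReal) {v : ℕ → ℂ} {C : ℝ}
    (hv : ∀ n, ‖v n‖ ≤ C) (x : lp (fun _ : ℕ => ℂ) p) :
    Summable fun n : ℕ => ‖v n * x n‖ ^ p.toReal := by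
  have hC0 : 0 ≤ C := (norm_nonneg (v 0)).trans (hv 0)
  have hx := (lp.memℓp x).summable hp
  refine Summable.of_nonneg_of_le (fun n => by positivity) (fun n => ?_)
    (hx.mul_left (C ^ p.toReal))
  calc ‖v n * x n‖ ^ p.toReal ≤ (C * ‖x n‖) ^ p.toReal := by
        apply Real.rpow_le_rpow (norm_nonneg _) ?_ hp.le
        rw [norm_mul]
        exact mul_le_mul_of_nonneg_right (hv n) (norm_nonneg _)
    _ = C ^ p.toReal * ‖x n‖ ^ p.toReal := Real.mul_rpow hC0 (norm_nonneg _)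

lemma shift_summable' (hp : 0 < p.toReal) {d : ℕ} {v : ℕ → ℂ} {C : ℝ}
    (hv : ∀ n, ‖v n‖ ≤ C) (x : lp (fun _ : ℕ => ℂ) p) :
    Summable fun k : ℕ => ‖shiftFun d v (⇑x) k‖ ^ p.toReal := by
  have hinj : Function.Injective (· + d) := add_left_injective d
  rw [← Function.Injective.summable_iff hinj (fun k hk => by
    rw [shiftFun_eq_zero _ _ hk, norm_zero, Real.zero_rpow hp.ne'])]
  have he : ((fun k => ‖shiftFun d v (⇑x) k‖ ^ p.toReal) ∘ (· + d))
      = fun n => ‖v n * x n‖ ^ p.toReal := by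
    funext n
    simp [Function.comp, shiftFun_apply_add]
  rw [he]
  exact shift_summable hp hv x

lemma shift_tsum_eq (hp : 0 < p.toReal) (d : ℕ) (v : ℕ → ℂ)
    (x : lp (fun _ : ℕ => ℂ) p) :
    (∑' k, ‖shiftFun d v (⇑x) k‖ ^ p.toReal) = ∑' n, ‖v n * x n‖ ^ p.toReal := by
  have hinj : Function.Injective (· + d) := add_left_injective d
  have hsupp : Function.support (fun k => ‖shiftFun d v (⇑x) k‖ ^ p.toReal)
      ⊆ Set.range (· + d) := by
    intro k hk
    by_contra h
    exact hk (show ‖shiftFun d v (⇑x) k‖ ^ p.toReal = 0 by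
      rw [shiftFun_eq_zero _ _ h, norm_zero, Real.zero_rpow hp.ne'])
  rw [← hinj.tsum_eq hsupp]
  exact tsum_congr fun n => by simp [shiftFun_apply_add]

variable (p) in
/-- the weighted forward shift by `d` with weights `v`, as a continuous linear map. -/
def shiftCLM (hp : 0 < p.toReal) (d : ℕ) (v : ℕ → ℂ) (C : ℝ) (hv : ∀ n, ‖v n‖ ≤ C) :
    lp (fun _ : ℕ => ℂ) p →L[ℂ] lp (fun _ : ℕ => ℂ) p :=
  LinearMap.mkContinuous
    { toFun := fun x => ⟨shiftFun d v ⇑x, memℓp_gen (shift_summable' hp hv x)⟩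
      map_add' := fun x y => by
        ext k
        show shiftFun d v (⇑(x + y)) k
          = shiftFun d v (⇑x) k + shiftFun d v (⇑y) k
        simp only [lp.coeFn_add, Pi.add_apply, shiftFun]
        split <;> simp [mul_add]
      map_smul' := fun c x => by
        ext k
        show shiftFun d v (⇑(c • x)) k = c • shiftFun d v (⇑x) k
        simp only [lp.coeFn_smul, Pi.smul_apply, shiftFun, smul_eq_mul]
        split <;> [ring; simp] }
    C
    (fun x => by
      have hC0 : 0 ≤ C := (norm_nonneg (v 0)).trans (hv 0)
      have hx := (lp.memℓp x).summable hp
      show ‖(⟨shiftFun d v ⇑x, memℓp_gen (shift_summable' hp hv x)⟩ :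
        lp (fun _ : ℕ => ℂ) p)‖ ≤ C * ‖x‖
      rw [lp.norm_eq_tsum_rpow hp, lp.norm_eq_tsum_rpow hp x]
      have h1 : (∑' k, ‖shiftFun d v (⇑x) k‖ ^ p.toReal)
          = ∑' n, ‖v n * x n‖ ^ p.toReal := shift_tsum_eq hp d v x
      calc (∑' k, ‖shiftFun d v (⇑x) k‖ ^ p.toReal) ^ (1 / p.toReal)
          = (∑' n, ‖v n * x n‖ ^ p.toReal) ^ (1 / p.toReal) := by rw [h1]
        _ ≤ (C ^ p.toReal * ∑' n, ‖x n‖ ^ p.toReal) ^ (1 / p.toReal) := by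
            apply Real.rpow_le_rpow (tsum_nonneg fun _ => by positivity) ?_ (by positivity)
            rw [← tsum_mul_left]
            refine Summable.tsum_le_tsum (fun n => ?_) (shift_summable hp hv x)
              (hx.mul_left _)
            calc ‖v n * x n‖ ^ p.toReal ≤ (C * ‖x n‖) ^ p.toReal := by
                  apply Real.rpow_le_rpow (norm_nonneg _) ?_ hp.le
                  rw [norm_mul]
                  exact mul_le_mul_of_nonneg_right (hv n) (norm_nonneg _)
              _ = C ^ p.toReal * ‖x n‖ ^ p.toReal := Real.mul_rpow hC0 (norm_nonneg _)
        _ = C * (∑' n, ‖x n‖ ^ p.toReal) ^ (1 / p.toReal) := by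
            rw [Real.mul_rpow (by positivity) (tsum_nonneg fun _ => by positivity),
              one_div, Real.rpow_rpow_inv hC0 hp.ne'])

lemma shiftCLM_norm_le (hp : 0 < p.toReal) (d : ℕ) (v : ℕ → ℂ) (C : ℝ)
    (hv : ∀ n, ‖v n‖ ≤ C) : ‖shiftCLM p hp d v C hv‖ ≤ C :=
  LinearMap.mkContinuous_norm_le _ ((norm_nonneg (v 0)).trans (hv 0)) _

lemma shiftCLM_single (hp : 0 < p.toReal) (d : ℕ) (v : ℕ → ℂ) (C : ℝ)
    (hv : ∀ n, ‖v n‖ ≤ C) (n m : ℕ) :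
    (shiftCLM p hp d v C hv (lp.single p n 1) : ∀ _ : ℕ, ℂ) m
      = if m = n + d then v n else 0 := by
  have h0 : (shiftCLM p hp d v C hv (lp.single p n 1) : ∀ _ : ℕ, ℂ) m
      = shiftFun d v (⇑(lp.single p n 1)) m := rfl
  rw [h0]
  by_cases h : m = n + d
  · subst h
    rw [shiftFun_apply_add, lp.single_apply_self, mul_one, if_pos rfl]
  · rw [if_neg h, shiftFun]
    split
    · rw [lp.single_apply_ne _ _ _ (show m - d ≠ n by omega), mul_zero]
    · rfl

variable (p) in
/-- coordinate evaluation as a continuous linear map. -/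
def evalCLM (hp0 : p ≠ 0) (k : ℕ) : lp (fun _ : ℕ => ℂ) p →L[ℂ] ℂ :=
  LinearMap.mkContinuous
    { toFun := fun f => f k
      map_add' := fun f g => by
        show (⇑(f + g)) k = (⇑f) k + (⇑g) k
        rw [lp.coeFn_add]; rfl
      map_smul' := fun c f => by
        show (⇑(c • f)) k = (RingHom.id ℂ) c • (⇑f) k
        rw [lp.coeFn_smul]; rfl }
    1 fun f => by rw [one_mul]; exact lp.norm_apply_le_norm hp0 f k

end FwAux

/-- The weights of the `m+3`-rd subdiagonal. -/
def useq (a b w : ℕ → ℂ) (m n : ℕ) : ℂ :=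
  (-1 : ℂ) ^ (m + 3) * cseq a b w n *
    ∏ k ∈ Finset.range (m + 1), b (n + 2 + k) / a (n + 3 + k)

/-- **Boundedness of the weighted forward shift.**  If
`β₁' = sup_n |w_n a_n/a_{n+1}| < ∞`, `β₁'' = sup_n |c_n| < ∞` and
`β₂ = ∑_{n=3}^∞ sup_j |c_j| ∏_{k=3}^n |b_{j+k−1}/a_{j+k}| < ∞`, then the weighted forward
shift `F_w` is represented by a bounded operator `T` on `ℓ^p(ℕ)` with
`‖T‖ ≤ β₁' + β₁'' + β₂`. -/
theorem forward_shift_bounded (p : ℝ≥0∞) [Fact (1 ≤ p)] (hp' : p ≠ ⊤)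
    (a b w : ℕ → ℂ) (ha : ∀ n, a n ≠ 0) (hb : ∀ n, b n ≠ 0)
    (h₁ : BddAbove (Set.range fun n : ℕ => ‖w n * a n / a (n + 1)‖))
    (h₂ : BddAbove (Set.range fun n : ℕ => ‖cseq a b w n‖))
    (h₃ : ∀ m : ℕ, BddAbove (Set.range fun j : ℕ =>
      ‖cseq a b w j‖ *
        ∏ i ∈ Finset.range (m + 1), ‖b (j + i + 2) / a (j + i + 3)‖))
    (h₄ : Summable fun m : ℕ => ⨆ j : ℕ,
      ‖cseq a b w j‖ *
        ∏ i ∈ Finset.range (m + 1), ‖b (j + i + 2) / a (j + i + 3)‖) :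
    ∃ T : lp (fun _ : ℕ => ℂ) p →L[ℂ] lp (fun _ : ℕ => ℂ) p,
      RepresentsFw p a b w T ∧
      ‖T‖ ≤ (⨆ n : ℕ, ‖w n * a n / a (n + 1)‖) +
        (⨆ n : ℕ, ‖cseq a b w n‖) +
        ∑' m : ℕ, ⨆ j : ℕ, ‖cseq a b w j‖ *
          ∏ i ∈ Finset.range (m + 1), ‖b (j + i + 2) / a (j + i + 3)‖ := by
    classical
  have hfact : (1 : ℝ≥0∞) ≤ p := Fact.out
  have hp0 : p ≠ 0 := (zero_lt_one.trans_le hfact).ne'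
  have hp : 0 < p.toReal := ENNReal.toReal_pos hp0 hp'
  set X := lp (fun _ : ℕ => ℂ) p with hX
  have hv₁ : ∀ n, ‖w n * a n / a (n + 1)‖ ≤ ⨆ n, ‖w n * a n / a (n + 1)‖ :=
    fun n => le_ciSup h₁ n
  have hv₂ : ∀ n, ‖cseq a b w n‖ ≤ ⨆ n, ‖cseq a b w n‖ :=
    fun n => le_ciSup h₂ n
  have habsu : ∀ m n, ‖useq a b w m n‖ =
      ‖cseq a b w n‖ *
        ∏ i ∈ Finset.range (m + 1), ‖b (n + i + 2) / a (n + i + 3)‖ := by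
    intro m n
    rw [useq, norm_mul, norm_mul, norm_pow, norm_neg, norm_one,
      one_pow, one_mul, norm_prod]
    congr 1
    refine Finset.prod_congr rfl fun i _ => ?_
    rw [show n + 2 + i = n + i + 2 from by omega, show n + 3 + i = n + i + 3 from by omega]
  have hvu : ∀ m n, ‖useq a b w m n‖ ≤ ⨆ j, ‖cseq a b w j‖ *
      ∏ i ∈ Finset.range (m + 1), ‖b (j + i + 2) / a (j + i + 3)‖ := by
    intro m n
    rw [habsu m n]
    exact le_ciSup (h₃ m) n
  set S₁ : X →L[ℂ] X := FwAux.shiftCLM p hp 1 (fun n => w n * a n / a (n + 1)) _ hv₁ with hS₁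
  set S₂ : X →L[ℂ] X := FwAux.shiftCLM p hp 2 (cseq a b w) _ hv₂ with hS₂
  set S₃ : ℕ → X →L[ℂ] X := fun m =>
    FwAux.shiftCLM p hp (m + 3) (useq a b w m)
      (⨆ j, ‖cseq a b w j‖ *
        ∏ i ∈ Finset.range (m + 1), ‖b (j + i + 2) / a (j + i + 3)‖) (hvu m)
    with hS₃
  have hS₃n : ∀ m, ‖S₃ m‖ ≤ ⨆ j, ‖cseq a b w j‖ *
      ∏ i ∈ Finset.range (m + 1), ‖b (j + i + 2) / a (j + i + 3)‖ :=
    fun m => FwAux.shiftCLM_norm_le hp _ _ _ _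
  have hnorms : Summable fun m => ‖S₃ m‖ :=
    Summable.of_nonneg_of_le (fun _ => norm_nonneg _) hS₃n h₄
  have hS₃sum : Summable S₃ := Summable.of_norm_bounded h₄ hS₃n
  have hcoord : ∀ (x : X) (k : ℕ),
      ((S₁ + S₂ + ∑' m, S₃ m) x : ∀ _ : ℕ, ℂ) k
        = (S₁ x : ∀ _ : ℕ, ℂ) k + (S₂ x : ∀ _ : ℕ, ℂ) k
          + ∑' m, (S₃ m x : ∀ _ : ℕ, ℂ) k := by
    intro x k
    have h5 : (∑' m, S₃ m) x = ∑' m, S₃ m x :=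
      (ContinuousLinearMap.apply ℂ X x).map_tsum hS₃sum
    have h6 : Summable fun m => S₃ m x := hS₃sum.mapL (ContinuousLinearMap.apply ℂ X x)
    have h7 : ((∑' m, S₃ m x : X) : ∀ _ : ℕ, ℂ) k = ∑' m, (S₃ m x : ∀ _ : ℕ, ℂ) k :=
      (FwAux.evalCLM (p := p) hp0 k).map_tsum h6
    show ((S₁ x + S₂ x + (∑' m, S₃ m) x : X) : ∀ _ : ℕ, ℂ) k = _
    rw [h5]
    exact congrArg (fun t => (S₁ x : ∀ _ : ℕ, ℂ) k + (S₂ x : ∀ _ : ℕ, ℂ) k + t) h7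
  have hentry : ∀ n k : ℕ,
      ((S₁ + S₂ + ∑' m, S₃ m) (lp.single p n 1) : ∀ _ : ℕ, ℂ) k
        = (if k = n + 1 then w n * a n / a (n + 1) else 0)
          + (if k = n + 2 then cseq a b w n else 0)
          + ∑' m, (if k = n + (m + 3) then useq a b w m n else 0) := by
    intro n k
    rw [hcoord, hS₁, hS₂, FwAux.shiftCLM_single, FwAux.shiftCLM_single]
    congr 1
    exact tsum_congr fun m => by rw [hS₃]; exact FwAux.shiftCLM_single hp _ _ _ _ _ _
  refine ⟨S₁ + S₂ + ∑' m, S₃ m, ⟨?_, ?_, ?_⟩, ?_⟩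
  · -- first subdiagonal
    intro n
    rw [hentry n (n + 1), if_pos rfl, if_neg (by omega)]
    rw [tsum_congr (fun m => if_neg (show ¬ n + 1 = n + (m + 3) by omega)), tsum_zero]
    ring
  · -- lower subdiagonals
    intro n k hk
    rw [hentry n k, if_neg (by omega)]
    by_cases hk2 : k = n + 2
    · subst hk2
      rw [if_pos rfl,
        tsum_congr (fun m => if_neg (show ¬ n + 2 = n + (m + 3) by omega)), tsum_zero,
        show n + 2 - n = 2 from by omega]
      norm_num
    · have hk3 : n + 3 ≤ k := by omega
      rw [if_neg hk2, zero_add, zero_add]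
      rw [tsum_eq_single (k - n - 3)
        (fun m' hm' => if_neg (fun h => hm' (by omega))),
        if_pos (show k = n + (k - n - 3 + 3) by omega), useq,
        show k - n - 3 + 3 = k - n from by omega,
        show k - n - 3 + 1 = k - n - 2 from by omega]
  · -- upper triangle vanishes
    intro n k hk
    rw [hentry n k, if_neg (by omega), if_neg (by omega),
      tsum_congr (fun m => if_neg (show ¬ k = n + (m + 3) by omega)), tsum_zero]
    ring
  · calc ‖S₁ + S₂ + ∑' m, S₃ m‖ ≤ ‖S₁ + S₂‖ + ‖∑' m, S₃ m‖ := norm_add_le _ _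
      _ ≤ ‖S₁‖ + ‖S₂‖ + ‖∑' m, S₃ m‖ := by gcongr; exact norm_add_le _ _
      _ ≤ (⨆ n, ‖w n * a n / a (n + 1)‖) + (⨆ n, ‖cseq a b w n‖) +
          ∑' m, ⨆ j, ‖cseq a b w j‖ *
            ∏ i ∈ Finset.range (m + 1), ‖b (j + i + 2) / a (j + i + 3)‖ := by
        refine add_le_add (add_le_add ?_ ?_) ?_
        · exact FwAux.shiftCLM_norm_le hp _ _ _ _
        · exact FwAux.shiftCLM_norm_le hp _ _ _ _
        · exact (norm_tsum_le_tsum_norm hnorms).trans (Summable.tsum_le_tsum hS₃n hnorms h₄)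
end
end

section
/- In the matrix setting (1 < p < ∞, a_n, b_n, w_n ≠ 0, T : ℓ^p(ℕ) → ℓ^p(ℕ) a continuous linear operator representing the weighted forward shift F_w): if the adjoint T* is hypercyclic (some φ ∈ X* has norm-dense orbit under T*) and ∑_{j=0}^∞ ( ∏_{k=0}^{j−1} |b_k/a_{k+1}| )^p < ∞ (i.e. the constant function 1 belongs to ℓ^p_{a,b}), then the sequence n ↦ ( ∏_{k=0}^{n−1}|w_k| / |a_n| ) · ( 1 + ∑_{j=1}^∞ ( ∏_{k=0}^{j−1} |b_{n+k}/a_{n+k+1}| )^p )^{1/p} is unbounded. -/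
open Filter Finset Topology
open scoped ENNReal NNReal

noncomputable section

/-! ### Auxiliary sequences -/

def qq (a b : ℕ → ℂ) (k : ℕ) : ℂ := b k / a (k+1)
def Pp (a b : ℕ → ℂ) (n r : ℕ) : ℂ := ∏ k ∈ Finset.range r, qq a b (n+k)
def uu (a b : ℕ → ℂ) (n m : ℕ) : ℂ :=
  if n ≤ m then (-1)^(m-n) * Pp a b n (m-n) / a n else 0
def gg (a b w : ℕ → ℂ) (i : ℕ) : ℂ := w i * a i / b i

lemma Pp_succ (a b : ℕ → ℂ) (n r : ℕ) :
    Pp a b n (r+1) = Pp a b n r * qq a b (n+r) := Finset.prod_range_succ _ _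

lemma Pp_succ' (a b : ℕ → ℂ) (n r : ℕ) :
    Pp a b n (r+1) = qq a b n * Pp a b (n+1) r := by
  unfold Pp
  rw [Finset.prod_range_succ', mul_comm, Nat.add_zero]
  congr 1
  exact Finset.prod_congr rfl fun k _ => by congr 1; omega

lemma Pp_split (a b : ℕ → ℂ) (n i r : ℕ) (h : i + 2 ≤ r) :
    Pp a b n r = Pp a b n i * (qq a b (n+i) * qq a b (n+i+1) *
      ∏ k ∈ Finset.range (r-i-2), qq a b (n+i+2+k)) := by
  have h1 : r = i + (2 + (r - i - 2)) := by omega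
  conv_lhs => rw [h1]
  unfold Pp
  rw [Finset.prod_range_add, Finset.prod_range_add]
  congr 1
  simp only [Finset.prod_range_succ, Finset.prod_range_zero, one_mul, Nat.add_zero]
  have e1 : n + (i + 1) = n + i + 1 := by omega
  rw [e1]
  congr 1
  exact Finset.prod_congr rfl fun k _ => by congr 1; omega

lemma cseq_eq (a b w : ℕ → ℂ) (ha : ∀ n, a n ≠ 0) (hb : ∀ n, b n ≠ 0) (n : ℕ) :
    cseq a b w n = (gg a b w (n+1) - gg a b w n) * (qq a b n * qq a b (n+1)) := by
  unfold cseq gg qq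
  have h1 := ha (n+1); have h2 := ha (n+2); have h3 := hb n; have h4 := hb (n+1)
  field_simp

/-! ### The telescoping identity -/

lemma telescope_sum (a b w : ℕ → ℂ) (ha : ∀ n, a n ≠ 0) (hb : ∀ n, b n ≠ 0)
    (E : ℕ → ℂ) (n s : ℕ)
    (hE1 : E (n+(s+1)) = w (n+(s+1)) * a (n+(s+1)) / a (n+(s+1)+1))
    (hE2 : ∀ i, i ≤ s → E (n+i) = (-1)^(s+2-i) * cseq a b w (n+i) *
        ∏ k ∈ Finset.range (s-i), qq a b (n+i+2+k)) :
    ∑ i ∈ Finset.range (s+2), uu a b n (n+i) * E (n+i)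
      = w n * ((-1):ℂ)^(s+1) * Pp a b (n+1) (s+1) / a (n+1) := by
  set K : ℂ := (-1:ℂ)^(s+2) * Pp a b n (s+2) / a n with hK
  have gterm : ∀ i ∈ Finset.range (s+1), uu a b n (n+i) * E (n+i)
      = K * gg a b w (n+(i+1)) - K * gg a b w (n+i) := by
    intro i hi
    have his : i ≤ s := by
      have := Finset.mem_range.1 hi; omega
    rw [hE2 i his, cseq_eq a b w ha hb (n+i)]
    have huu : uu a b n (n+i) = (-1)^i * Pp a b n i / a n := by
      unfold uu; rw [if_pos (Nat.le_add_right n i), Nat.add_sub_cancel_left]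
    rw [huu]
    have hsg : ((-1:ℂ))^i * (-1:ℂ)^(s+2-i) = (-1:ℂ)^(s+2) := by
      rw [← pow_add, Nat.add_sub_cancel' (by omega : i ≤ s+2)]
    have hsplit := Pp_split a b n i (s+2) (by omega)
    rw [show s+2-i-2 = s-i from by omega] at hsplit
    have hni : n + (i+1) = n + i + 1 := by omega
    rw [hni, hK, hsplit]
    linear_combination (Pp a b n i *
      ((gg a b w (n+i+1) - gg a b w (n+i)) * (qq a b (n+i) * qq a b (n+i+1))) *
      (∏ k ∈ Finset.range (s-i), qq a b (n+i+2+k)) / a n) * hsg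
  calc ∑ i ∈ Finset.range (s+2), uu a b n (n+i) * E (n+i)
      = ∑ i ∈ Finset.range (s+1), uu a b n (n+i) * E (n+i)
          + uu a b n (n+(s+1)) * E (n+(s+1)) := Finset.sum_range_succ _ _
    _ = (K * gg a b w (n+(s+1)) - K * gg a b w (n+0))
          + uu a b n (n+(s+1)) * E (n+(s+1)) := by
        congr 1
        rw [Finset.sum_congr rfl gterm]
        exact Finset.sum_range_sub (fun t => K * gg a b w (n+t)) (s+1)
    _ = w n * ((-1):ℂ)^(s+1) * Pp a b (n+1) (s+1) / a (n+1) := by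
        rw [hE1]
        have huu : uu a b n (n+(s+1)) = (-1)^(s+1) * Pp a b n (s+1) / a n := by
          unfold uu; rw [if_pos (Nat.le_add_right _ _), Nat.add_sub_cancel_left]
        have hK1 : K = -((-1:ℂ)^(s+1) * (Pp a b n (s+1) * qq a b (n+(s+1))) / a n) := by
          rw [hK, Pp_succ, show s+2 = (s+1)+1 from rfl, pow_succ]
          ring
        have hK2 : K = -((-1:ℂ)^(s+1) * (qq a b n * Pp a b (n+1) (s+1)) / a n) := by
          rw [hK, show s+2 = (s+1)+1 from rfl, Pp_succ', pow_succ]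
          ring
        nth_rewrite 1 [hK1]
        nth_rewrite 1 [hK2]
        rw [huu, Nat.add_zero]
        unfold qq gg
        have h1 := ha n; have h2 := ha (n+1); have h3 := ha (n+(s+1)+1)
        have h4 := hb n; have h5 := hb (n+(s+1))
        simp only [Nat.add_zero]
        clear_value K
        clear hK hK1 hK2 gterm hE1 hE2 huu K
        revert h1 h2 h3 h4 h5
        generalize ((-1):ℂ)^(s+1) = z
        generalize Pp a b n (s+1) = P1
        generalize Pp a b (n+1) (s+1) = P2
        generalize w (n+(s+1)) = Wj
        generalize w n = Wn
        generalize b (n+(s+1)) = Bj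
        generalize b n = Bn
        generalize a (n+(s+1)+1) = Aj1
        generalize a (n+(s+1)) = Aj
        generalize a (n+1) = A1
        generalize a n = An
        intro h1 h2 h3 h4 h5
        field_simp
        ring_nf

/-! ### `lp` facts -/

lemma norm_uu (a b : ℕ → ℂ) (n j : ℕ) :
    ‖uu a b n (n+j)‖
      = (∏ k ∈ Finset.range j, ‖b (n+k) / a (n+k+1)‖) / ‖a n‖ := by
  unfold uu
  rw [if_pos (Nat.le_add_right n j), Nat.add_sub_cancel_left]
  rw [norm_div, norm_mul, norm_pow, norm_neg, norm_one, one_pow, one_mul]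
  congr 1
  unfold Pp qq
  rw [norm_prod]

lemma summable_tail (a b : ℕ → ℂ) (ha : ∀ n, a n ≠ 0) (hb : ∀ n, b n ≠ 0) (pr : ℝ)
    (hone : Summable fun j : ℕ =>
      (∏ k ∈ Finset.range j, ‖b k / a (k + 1)‖) ^ pr) (n : ℕ) :
    Summable fun j : ℕ =>
      (∏ k ∈ Finset.range j, ‖b (n+k) / a (n+k+1)‖) ^ pr := by
  set A : ℕ → ℝ := fun j => ∏ k ∈ Finset.range j, ‖b k / a (k + 1)‖ with hA
  have hAnonneg : ∀ j, 0 ≤ A j := fun j => Finset.prod_nonneg fun k _ => (norm_nonneg _)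
  have hAn0 : A n ≠ 0 := by
    refine Finset.prod_ne_zero_iff.2 fun k _ => ?_
    simp only [ne_eq, norm_eq_zero]
    exact div_ne_zero (hb k) (ha (k+1))
  have hrw : ∀ j, (∏ k ∈ Finset.range j, ‖b (n+k) / a (n+k+1)‖) = A (n+j) / A n := by
    intro j
    rw [eq_div_iff hAn0, mul_comm, hA]
    exact (Finset.prod_range_add (fun x => ‖b x / a (x+1)‖) n j).symm
  have h1 : Summable fun j : ℕ => A (n+j) ^ pr := by
    have h2 : Summable fun j : ℕ => A (j+n) ^ pr := (summable_nat_add_iff n).2 hone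
    exact h2.congr fun j => by rw [add_comm]
  have h3 : Summable fun j : ℕ => A (n+j) ^ pr / A n ^ pr := h1.div_const _
  refine h3.congr fun j => ?_
  rw [hrw j, Real.div_rpow (hAnonneg _) (hAnonneg _)]

lemma mem_uu (p : ℝ≥0∞) [Fact (1 ≤ p)] (a b : ℕ → ℂ)
    (ha : ∀ n, a n ≠ 0) (hb : ∀ n, b n ≠ 0)
    (hone : Summable fun j : ℕ =>
      (∏ k ∈ Finset.range j, ‖b k / a (k + 1)‖) ^ p.toReal) (n : ℕ) :
    Memℓp (uu a b n) p := by
  apply memℓp_gen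
  have key : Summable fun j : ℕ => ‖uu a b n (n+j)‖ ^ p.toReal := by
    have h1 := (summable_tail a b ha hb p.toReal hone n).div_const (‖a n‖ ^ p.toReal)
    refine h1.congr fun j => ?_
    rw [norm_uu, Real.div_rpow (Finset.prod_nonneg fun k _ => norm_nonneg _)
      (norm_nonneg _)]
  refine (summable_nat_add_iff n).1 (key.congr fun j => by rw [add_comm])

/-- The vector of `ℓ^p` representing `z^n` in the basis `f_k`. -/
def xv (p : ℝ≥0∞) [Fact (1 ≤ p)] (a b : ℕ → ℂ)
    (ha : ∀ n, a n ≠ 0) (hb : ∀ n, b n ≠ 0)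
    (hone : Summable fun j : ℕ =>
      (∏ k ∈ Finset.range j, ‖b k / a (k + 1)‖) ^ p.toReal) (n : ℕ) :
    lp (fun _ : ℕ => ℂ) p :=
  ⟨uu a b n, mem_uu p a b ha hb hone n⟩

lemma xv_coe (p : ℝ≥0∞) [Fact (1 ≤ p)] (a b : ℕ → ℂ)
    (ha : ∀ n, a n ≠ 0) (hb : ∀ n, b n ≠ 0)
    (hone : Summable fun j : ℕ =>
      (∏ k ∈ Finset.range j, ‖b k / a (k + 1)‖) ^ p.toReal) (n : ℕ) :
    ((xv p a b ha hb hone n : lp (fun _ : ℕ => ℂ) p) : ∀ _ : ℕ, ℂ) = uu a b n := rfl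

/-- coordinate evaluation as a CLM -/
def coordCLM (p : ℝ≥0∞) [Fact (1 ≤ p)] (m : ℕ) : lp (fun _ : ℕ => ℂ) p →L[ℂ] ℂ :=
  LinearMap.mkContinuous
    { toFun := fun f => f m
      map_add' := fun f g => by simp [lp.coeFn_add]
      map_smul' := fun c f => by simp [lp.coeFn_smul] }
    1 (fun f => by
      show ‖(f : ∀ _ : ℕ, ℂ) m‖ ≤ 1 * ‖f‖
      simpa using lp.norm_apply_le_norm (by
        have : (1:ℝ≥0∞) ≤ p := Fact.out
        intro h; rw [h] at this; exact (by norm_num : ¬ ((1:ℝ≥0∞) ≤ 0)) this) f m)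

@[simp] lemma coordCLM_apply (p : ℝ≥0∞) [Fact (1 ≤ p)] (m : ℕ) (f : lp (fun _ : ℕ => ℂ) p) :
    coordCLM p m f = (f : ∀ _ : ℕ, ℂ) m := rfl

lemma apply_coord (p : ℝ≥0∞) [Fact (1 ≤ p)] (hp' : p ≠ ⊤)
    (T : lp (fun _ : ℕ => ℂ) p →L[ℂ] lp (fun _ : ℕ => ℂ) p)
    (f : lp (fun _ : ℕ => ℂ) p) (m : ℕ)
    (hz : ∀ j, m ≤ j → (T (lp.single p j 1) : ∀ _ : ℕ, ℂ) m = 0) :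
    (T f : ∀ _ : ℕ, ℂ) m
      = ∑ j ∈ Finset.range m, (f : ∀ _ : ℕ, ℂ) j * (T (lp.single p j 1) : ∀ _ : ℕ, ℂ) m := by
  have h1 : HasSum (fun j : ℕ => lp.single p j ((f : ∀ _ : ℕ, ℂ) j)) f := lp.hasSum_single hp' f
  have h2 : HasSum (fun j : ℕ => (coordCLM p m) (T (lp.single p j ((f : ∀ _ : ℕ, ℂ) j))))
      ((coordCLM p m) (T f)) := ((coordCLM p m).comp T).hasSum h1
  have h3 : ∀ j : ℕ, (coordCLM p m) (T (lp.single p j ((f : ∀ _ : ℕ, ℂ) j)))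
      = (f : ∀ _ : ℕ, ℂ) j * (T (lp.single p j 1) : ∀ _ : ℕ, ℂ) m := by
    intro j
    have : lp.single p j ((f : ∀ _ : ℕ, ℂ) j)
        = ((f : ∀ _ : ℕ, ℂ) j • lp.single p j (1:ℂ) : lp (fun _ : ℕ => ℂ) p) := by
      apply lp.ext
      funext i
      rw [lp.coeFn_smul]
      by_cases h : i = j
      · subst h; simp [lp.single_apply_self]
      · simp [lp.single_apply_ne p j _ h, Pi.single_apply, h]
    rw [this, map_smul, map_smul]
    simp [coordCLM_apply]
  rw [funext h3] at h2
  have h4 : HasSum (fun j : ℕ => (f : ∀ _ : ℕ, ℂ) j * (T (lp.single p j 1) : ∀ _ : ℕ, ℂ) m)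
      (∑ j ∈ Finset.range m, (f : ∀ _ : ℕ, ℂ) j * (T (lp.single p j 1) : ∀ _ : ℕ, ℂ) m) := by
    apply hasSum_sum_of_ne_finset_zero
    intro j hj
    rw [hz j (by simpa using hj)]
    ring
  simpa using h2.unique h4
lemma T_xv (p : ℝ≥0∞) [Fact (1 ≤ p)] (hp' : p ≠ ⊤) (a b w : ℕ → ℂ)
    (ha : ∀ n, a n ≠ 0) (hb : ∀ n, b n ≠ 0)
    (T : lp (fun _ : ℕ => ℂ) p →L[ℂ] lp (fun _ : ℕ => ℂ) p)
    (hT : RepresentsFw p a b w T)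
    (hone : Summable fun j : ℕ =>
      (∏ k ∈ Finset.range j, ‖b k / a (k + 1)‖) ^ p.toReal) (n : ℕ) :
    T (xv p a b ha hb hone n) = w n • xv p a b ha hb hone (n+1) := by
  apply lp.ext
  funext m
  have hcoord := apply_coord p hp' T (xv p a b ha hb hone n) m (fun j hj => hT.2.2 j m hj)
  rw [lp.coeFn_smul, Pi.smul_apply, hcoord, xv_coe, xv_coe, smul_eq_mul]
  rcases Nat.lt_or_ge m (n+2) with hm | hm
  · rcases Nat.lt_or_ge m (n+1) with hm1 | hm1
    · -- m ≤ n : both sides vanish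
      rw [Finset.sum_eq_zero fun j hj => by
        have hjn : ¬ (n ≤ j) := by have := Finset.mem_range.1 hj; omega
        unfold uu; rw [if_neg hjn, zero_mul]]
      unfold uu
      rw [if_neg (by omega)]
      ring
    · -- m = n+1
      have hm2 : m = n + 1 := by omega
      subst hm2
      rw [Finset.sum_eq_single_of_mem n (Finset.mem_range.2 (by omega))
        (fun j hj hne => by
          have hjn : ¬ (n ≤ j) := by have := Finset.mem_range.1 hj; omega
          unfold uu; rw [if_neg hjn, zero_mul])]
      rw [hT.1 n]
      unfold uu Pp
      rw [if_pos (le_refl n), if_pos (le_refl (n+1))]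
      simp only [Nat.sub_self, pow_zero, Finset.range_zero, Finset.prod_empty, one_mul, mul_one]
      have h1 := ha n; have h2 := ha (n+1)
      field_simp
  · -- m ≥ n+2
    obtain ⟨s, rfl⟩ : ∃ s, m = n + (s+2) := ⟨m - n - 2, by omega⟩
    rw [Finset.sum_range_add]
    rw [Finset.sum_eq_zero fun j hj => by
        have hjn : ¬ (n ≤ j) := by have := Finset.mem_range.1 hj; omega
        unfold uu; rw [if_neg hjn, zero_mul] , zero_add]
    have htel := telescope_sum a b w ha hb
      (fun j => (T (lp.single p j 1) : ∀ _ : ℕ, ℂ) (n+(s+2))) n s ?_ ?_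
    · rw [htel]
      unfold uu
      rw [if_pos (by omega : n+1 ≤ n+(s+2)), show n+(s+2) - (n+1) = s+1 from by omega]
      ring
    · -- hE1
      show (T (lp.single p (n+(s+1)) 1) : ∀ _ : ℕ, ℂ) (n+(s+2))
        = w (n+(s+1)) * a (n+(s+1)) / a (n+(s+1)+1)
      have h := hT.1 (n+(s+1))
      rwa [show n+(s+1)+1 = n+(s+2) from by omega] at h
    · -- hE2
      intro i his
      show (T (lp.single p (n+i) 1) : ∀ _ : ℕ, ℂ) (n+(s+2))
        = (-1)^(s+2-i) * cseq a b w (n+i) * ∏ k ∈ Finset.range (s-i), qq a b (n+i+2+k)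
      have h := hT.2.1 (n+i) (n+(s+2)) (by omega)
      rw [show n+(s+2) - (n+i) = s+2-i from by omega] at h
      rw [show s+2-i-2 = s-i from by omega] at h
      rw [h]
      congr 1
      refine Finset.prod_congr rfl fun k _ => ?_
      unfold qq
      rw [show n+i+3+k = n+i+2+k+1 from by omega]

lemma iter_xv (p : ℝ≥0∞) [Fact (1 ≤ p)] (hp' : p ≠ ⊤) (a b w : ℕ → ℂ)
    (ha : ∀ n, a n ≠ 0) (hb : ∀ n, b n ≠ 0)
    (T : lp (fun _ : ℕ => ℂ) p →L[ℂ] lp (fun _ : ℕ => ℂ) p)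
    (hT : RepresentsFw p a b w T)
    (hone : Summable fun j : ℕ =>
      (∏ k ∈ Finset.range j, ‖b k / a (k + 1)‖) ^ p.toReal) (n : ℕ) :
    (T ^ n) (xv p a b ha hb hone 0)
      = (∏ k ∈ Finset.range n, w k) • xv p a b ha hb hone n := by
  induction n with
  | zero => simp
  | succ n ih =>
    rw [pow_succ']
    rw [ContinuousLinearMap.mul_apply, ih, map_smul, T_xv p hp' a b w ha hb T hT hone n,
      Finset.prod_range_succ, smul_smul, mul_comm]

lemma norm_xv (p : ℝ≥0∞) [Fact (1 ≤ p)] (hp0 : 0 < p.toReal) (a b : ℕ → ℂ)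
    (ha : ∀ n, a n ≠ 0) (hb : ∀ n, b n ≠ 0)
    (hone : Summable fun j : ℕ =>
      (∏ k ∈ Finset.range j, ‖b k / a (k + 1)‖) ^ p.toReal) (n : ℕ) :
    ‖xv p a b ha hb hone n‖
      = (1 + ∑' j : ℕ, (∏ k ∈ Finset.range (j + 1),
          ‖b (n + k) / a (n + k + 1)‖) ^ p.toReal) ^ (1 / p.toReal)
        / ‖a n‖ := by
  set pr := p.toReal
  rw [lp.norm_eq_tsum_rpow hp0]
  have hsupp : Function.support (fun m => ‖uu a b n m‖ ^ pr) ⊆ Set.range (fun j => n + j) := by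
    intro m hm
    rcases Nat.lt_or_ge m n with h | h
    · exfalso
      apply hm
      show ‖uu a b n m‖ ^ pr = 0
      unfold uu
      rw [if_neg (by omega), norm_zero, Real.zero_rpow hp0.ne']
    · exact ⟨m - n, by show n + (m - n) = m; omega⟩
  have h1 : ∑' m : ℕ, ‖(xv p a b ha hb hone n : ∀ _ : ℕ, ℂ) m‖ ^ pr
      = ∑' j : ℕ, ‖uu a b n (n+j)‖ ^ pr :=
    ((add_right_injective n).tsum_eq hsupp).symm
  rw [h1]
  have h2 : ∀ j : ℕ, ‖uu a b n (n+j)‖ ^ pr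
      = (∏ k ∈ Finset.range j, ‖b (n+k) / a (n+k+1)‖) ^ pr
          / ‖a n‖ ^ pr := by
    intro j
    rw [norm_uu, Real.div_rpow (Finset.prod_nonneg fun k _ => norm_nonneg _)
      (norm_nonneg _)]
  rw [tsum_congr h2, tsum_div_const]
  have h3 : ∑' j : ℕ, (∏ k ∈ Finset.range j, ‖b (n+k) / a (n+k+1)‖) ^ pr
      = 1 + ∑' j : ℕ, (∏ k ∈ Finset.range (j+1),
          ‖b (n+k) / a (n+k+1)‖) ^ pr := by
    rw [Summable.tsum_eq_zero_add (summable_tail a b ha hb pr hone n)]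
    congr 1
    simp [Real.one_rpow]
  rw [h3]
  have hnonneg : 0 ≤ 1 + ∑' j : ℕ, (∏ k ∈ Finset.range (j+1),
      ‖b (n+k) / a (n+k+1)‖) ^ pr := by
    have hts : (0:ℝ) ≤ ∑' j : ℕ, (∏ k ∈ Finset.range (j+1),
        ‖b (n+k) / a (n+k+1)‖) ^ pr :=
      tsum_nonneg fun j =>
        Real.rpow_nonneg (Finset.prod_nonneg fun k _ => norm_nonneg _) pr
    linarith
  rw [Real.div_rpow hnonneg (Real.rpow_nonneg (norm_nonneg _) _)]
  congr 1
  rw [← Real.rpow_mul (norm_nonneg _), mul_one_div_cancel hp0.ne', Real.rpow_one]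

/-- **Necessary condition for hypercyclicity of `F_w^*`.**  If the adjoint `T*` of the
weighted forward shift is hypercyclic and the constant function `1` belongs to `ℓ^p_{a,b}`
(i.e. `∑_j (∏_{k<j}|b_k/a_{k+1}|)^p < ∞`), then
`n ↦ (∏_{k<n}|w_k|/|a_n|)·(1 + ∑_{j≥1}(∏_{k<j}|b_{n+k}/a_{n+k+1}|)^p)^{1/p}` is unbounded. -/
theorem adjoint_hypercyclic_necessary (p : ℝ≥0∞) [Fact (1 ≤ p)]
    (hp : 1 < p) (hp' : p ≠ ⊤)
    (a b w : ℕ → ℂ) (ha : ∀ n, a n ≠ 0) (hb : ∀ n, b n ≠ 0) (hw : ∀ n, w n ≠ 0)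
    (T : lp (fun _ : ℕ => ℂ) p →L[ℂ] lp (fun _ : ℕ => ℂ) p)
    (hT : RepresentsFw p a b w T)
    (hhc : ∃ φ : lp (fun _ : ℕ => ℂ) p →L[ℂ] ℂ,
      Dense (Set.range fun n : ℕ => φ.comp (T ^ n)))
    (hone : Summable fun j : ℕ =>
      (∏ k ∈ Finset.range j, ‖b k / a (k + 1)‖) ^ p.toReal) :
    ¬ BddAbove (Set.range fun n : ℕ =>
      ((∏ k ∈ Finset.range n, ‖w k‖) / ‖a n‖) *
        (1 + ∑' j : ℕ,
          (∏ k ∈ Finset.range (j + 1),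
            ‖b (n + k) / a (n + k + 1)‖) ^ p.toReal) ^ (1 / p.toReal)) := by
  intro hbdd
  obtain ⟨C, hC⟩ := hbdd
  obtain ⟨φ, hφ⟩ := hhc
  have hp0 : 0 < p.toReal := ENNReal.toReal_pos (zero_lt_one.trans hp).ne' hp'
  have hMle : ∀ n : ℕ, ((∏ k ∈ Finset.range n, ‖w k‖) / ‖a n‖) *
      (1 + ∑' j : ℕ, (∏ k ∈ Finset.range (j + 1),
        ‖b (n + k) / a (n + k + 1)‖) ^ p.toReal) ^ (1 / p.toReal) ≤ C :=
    fun n => hC ⟨n, rfl⟩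
  set x0 : lp (fun _ : ℕ => ℂ) p := xv p a b ha hb hone 0 with hx0
  have hnorm : ∀ n : ℕ, ‖(T ^ n) x0‖ ≤ C := by
    intro n
    rw [hx0, iter_xv p hp' a b w ha hb T hT hone n, norm_smul,
      norm_xv p hp0 a b ha hb hone n]
    calc ‖(∏ k ∈ Finset.range n, w k : ℂ)‖ *
          ((1 + ∑' j : ℕ, (∏ k ∈ Finset.range (j + 1),
            ‖b (n + k) / a (n + k + 1)‖) ^ p.toReal) ^ (1 / p.toReal)
            / ‖a n‖)
        = ((∏ k ∈ Finset.range n, ‖w k‖) / ‖a n‖) *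
            (1 + ∑' j : ℕ, (∏ k ∈ Finset.range (j + 1),
              ‖b (n + k) / a (n + k + 1)‖) ^ p.toReal) ^ (1 / p.toReal) := by
          rw [norm_prod]
          ring
      _ ≤ C := hMle n
  have hC0 : 0 ≤ C := by
    refine le_trans ?_ (hnorm 0)
    positivity
  -- The functional ψ hitting the target value t at x0
  have hx0c : (coordCLM p 0) x0 = 1 / a 0 := by
    show (x0 : ∀ _ : ℕ, ℂ) 0 = 1 / a 0
    rw [hx0, xv_coe]
    unfold uu Pp
    simp
  set t : ℂ := ((‖φ‖ * C + 2 : ℝ) : ℂ) with ht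
  set ψ : lp (fun _ : ℕ => ℂ) p →L[ℂ] ℂ := (t * a 0) • coordCLM p 0 with hψ
  have hψx0 : ψ x0 = t := by
    rw [hψ]
    simp only [ContinuousLinearMap.smul_apply, hx0c, smul_eq_mul]
    rw [mul_one_div, mul_div_assoc, div_self (ha 0), mul_one]
  obtain ⟨y, hy, hdy⟩ := hφ.exists_dist_lt ψ (show (0:ℝ) < (‖x0‖+1)⁻¹ by positivity)
  obtain ⟨n, rfl⟩ := hy
  have happ : (φ.comp (T ^ n)) x0 = φ ((T ^ n) x0) := rfl
  have hest1 : ‖(φ.comp (T ^ n)) x0 - t‖ < 1 := by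
    rw [← hψx0]
    calc ‖(φ.comp (T ^ n)) x0 - ψ x0‖
        = ‖(φ.comp (T ^ n) - ψ) x0‖ := by rw [ContinuousLinearMap.sub_apply]
      _ ≤ ‖φ.comp (T ^ n) - ψ‖ * ‖x0‖ := ContinuousLinearMap.le_opNorm _ _
      _ ≤ ‖φ.comp (T ^ n) - ψ‖ * (‖x0‖ + 1) := by
          have := norm_nonneg (φ.comp (T ^ n) - ψ)
          nlinarith [norm_nonneg x0]
      _ < (‖x0‖+1)⁻¹ * (‖x0‖ + 1) := by
          refine mul_lt_mul_of_pos_right ?_ (by positivity)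
          rw [← dist_eq_norm, dist_comm]
          exact hdy
      _ = 1 := inv_mul_cancel₀ (by positivity)
  have hest2 : ‖(φ.comp (T ^ n)) x0‖ ≤ ‖φ‖ * C := by
    rw [happ]
    calc ‖φ ((T ^ n) x0)‖ ≤ ‖φ‖ * ‖(T ^ n) x0‖ := ContinuousLinearMap.le_opNorm _ _
      _ ≤ ‖φ‖ * C := mul_le_mul_of_nonneg_left (hnorm n) (norm_nonneg φ)
  have hnt : ‖t‖ = ‖φ‖ * C + 2 := by
    rw [ht, Complex.norm_real, Real.norm_of_nonneg]
    positivity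
  have : ‖t‖ ≤ ‖(φ.comp (T ^ n)) x0 - t‖ + ‖(φ.comp (T ^ n)) x0‖ := by
    calc ‖t‖ = ‖t - (φ.comp (T ^ n)) x0 + (φ.comp (T ^ n)) x0‖ := by ring_nf
      _ ≤ ‖t - (φ.comp (T ^ n)) x0‖ + ‖(φ.comp (T ^ n)) x0‖ := norm_add_le _ _
      _ = ‖(φ.comp (T ^ n)) x0 - t‖ + ‖(φ.comp (T ^ n)) x0‖ := by rw [norm_sub_rev]
  rw [hnt] at this
  linarith
end
end

section
/- In the matrix setting (1 < p < ∞, a_n, b_n, w_n ≠ 0, T : ℓ^p(ℕ) → ℓ^p(ℕ) a continuous linear operator representing the weighted forward shift F_w): the adjoint T* is always supercyclic, i.e. there exists φ ∈ (ℓ^p(ℕ))* such that the set {c · (T*)^n φ : c ∈ ℂ, n ∈ ℕ} is norm-dense in (ℓ^p(ℕ))*. -/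
open Filter Finset Topology
open scoped ENNReal NNReal

set_option synthInstance.maxHeartbeats 400000
set_option maxHeartbeats 1000000

noncomputable section

namespace AdjointSupercyclicAux
set_option linter.unusedSectionVars false

variable (p : ℝ≥0∞) [Fact (1 ≤ p)]

lemma hp0 : p ≠ 0 := (lt_of_lt_of_le zero_lt_one Fact.out).ne'

/-- Evaluation at coordinate `n`, as a continuous linear functional on `ℓ^p`. -/
def eval (n : ℕ) : lp (fun _ : ℕ => ℂ) p →L[ℂ] ℂ :=
  LinearMap.mkContinuous
    { toFun := fun f => f n
      map_add' := fun f g => rfl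
      map_smul' := fun c f => rfl }
    1 (fun f => by rw [one_mul]; exact lp.norm_apply_le_norm (hp0 p) f n)

@[simp] lemma eval_apply (n : ℕ) (f : lp (fun _ : ℕ => ℂ) p) :
    eval p n f = (f : ∀ _ : ℕ, ℂ) n := rfl

lemma eval_single (n m : ℕ) (c : ℂ) :
    eval p n (lp.single p m c) = if n = m then c else 0 := by
  rw [eval_apply, lp.single_apply]
  split_ifs with h
  · subst h; simp
  · simp [Pi.single_apply, h]

lemma single_eq_smul (m : ℕ) (c : ℂ) :
    (lp.single p m c : lp (fun _ : ℕ => ℂ) p) = c • lp.single p m (1 : ℂ) := by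
  rw [← lp.single_smul]
  norm_num

/-- Two continuous functionals on `ℓ^p` (`p ≠ ∞`) agreeing on the unit vectors agree. -/
lemma ext_singles (hp' : p ≠ ⊤) {f g : lp (fun _ : ℕ => ℂ) p →L[ℂ] ℂ}
    (h : ∀ n, f (lp.single p n 1) = g (lp.single p n 1)) : f = g := by
  ext x
  have hx := lp.hasSum_single hp' x
  have hf := hx.mapL f
  have hg := hx.mapL g
  refine hf.unique ?_
  have : ∀ n : ℕ, f (lp.single p n ((x : ∀ _ : ℕ, ℂ) n)) =
      g (lp.single p n ((x : ∀ _ : ℕ, ℂ) n)) := by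
    intro n
    rw [single_eq_smul, map_smul, map_smul, h n]
  simpa [this] using hg

/-- Coordinates of a finite sum of singles. -/
lemma coord_sum_singles (g : ℕ → ℂ) (s : Finset ℕ) (j : ℕ) :
    ((∑ n ∈ s, lp.single p n (g n) : lp (fun _ : ℕ => ℂ) p) : ∀ _ : ℕ, ℂ) j
      = if j ∈ s then g j else 0 := by
  simp only [lp.coeFn_sum, Finset.sum_apply, lp.single_apply]
  simp [Pi.single_apply]

/-- A vector supported below `S` equals a finite sum of singles. -/
lemma eq_sum_singles (v : lp (fun _ : ℕ => ℂ) p) (S : ℕ)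
    (hv : ∀ j, S ≤ j → (v : ∀ _ : ℕ, ℂ) j = 0) :
    v = ∑ j ∈ Finset.range S, lp.single p j ((v : ∀ _ : ℕ, ℂ) j) := by
  apply lp.ext
  funext j
  rw [coord_sum_singles]
  by_cases hj : j ∈ Finset.range S
  · simp [hj]
  · simp only [hj, if_false]
    exact hv j (by simpa using hj)

variable (T : lp (fun _ : ℕ => ℂ) p →L[ℂ] lp (fun _ : ℕ => ℂ) p)

/-- The Banach adjoint `φ ↦ φ ∘ T`, as a continuous linear endomorphism of the dual. -/
def adj : (lp (fun _ : ℕ => ℂ) p →L[ℂ] ℂ) →L[ℂ] (lp (fun _ : ℕ => ℂ) p →L[ℂ] ℂ) :=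
  (ContinuousLinearMap.compL ℂ (lp (fun _ : ℕ => ℂ) p) (lp (fun _ : ℕ => ℂ) p) ℂ).flip T

@[simp] lemma adj_apply (φ : lp (fun _ : ℕ => ℂ) p →L[ℂ] ℂ) :
    adj p T φ = φ.comp T := rfl

lemma adj_pow (n : ℕ) : ∀ φ : lp (fun _ : ℕ => ℂ) p →L[ℂ] ℂ,
    (adj p T ^ n) φ = φ.comp (T ^ n) := by
  induction n with
  | zero => intro φ; ext x; simp
  | succ n ih =>
      intro φ
      have h : (adj p T ^ (n+1)) φ = (adj p T ^ n) (adj p T φ) := by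
        rw [pow_succ]; rfl
      rw [h, adj_apply, ih]
      ext x
      simp [pow_succ', ContinuousLinearMap.mul_apply]

lemma raise (hp' : p ≠ ⊤)
    (h3 : ∀ n m : ℕ, m ≤ n → (T (lp.single p n 1) : ∀ _ : ℕ, ℂ) m = 0)
    (x : lp (fun _ : ℕ => ℂ) p) (s : ℕ) (hx : ∀ i, i < s → (x : ∀ _ : ℕ, ℂ) i = 0)
    (j : ℕ) (hj : j ≤ s) : (T x : ∀ _ : ℕ, ℂ) j = 0 := by
  have hx2 := (lp.hasSum_single hp' x).mapL ((eval p j).comp T)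
  have hz : ∀ n : ℕ, ((eval p j).comp T) (lp.single p n ((x : ∀ _ : ℕ, ℂ) n)) = 0 := by
    intro n
    rcases lt_or_ge n s with h | h
    · rw [hx n h, single_eq_smul]
      simp
    · rw [single_eq_smul, map_smul]
      have h0 := h3 n j (hj.trans h)
      simp only [ContinuousLinearMap.comp_apply, eval_apply, h0]
      simp
  rw [funext hz] at hx2
  have h0 := hx2.unique hasSum_zero
  simpa using h0

lemma pow_raise (hp' : p ≠ ⊤)
    (h3 : ∀ n m : ℕ, m ≤ n → (T (lp.single p n 1) : ∀ _ : ℕ, ℂ) m = 0) :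
    ∀ (k : ℕ) (x : lp (fun _ : ℕ => ℂ) p) (s : ℕ),
      (∀ i, i < s → (x : ∀ _ : ℕ, ℂ) i = 0) →
      ∀ j, j < s + k → ((T ^ k) x : ∀ _ : ℕ, ℂ) j = 0 := by
  intro k
  induction k with
  | zero =>
      intro x s hx j hj
      have : (T ^ 0) x = x := by rw [pow_zero]; rfl
      rw [this]
      exact hx j (by omega)
  | succ k ih =>
      intro x s hx j hj
      have hTx : ∀ i, i < s + 1 → (T x : ∀ _ : ℕ, ℂ) i = 0 := fun i hi =>
        raise p T hp' h3 x s hx i (by omega)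
      have hpow : (T ^ (k+1)) x = (T ^ k) (T x) := by
        rw [pow_succ]; rfl
      rw [hpow]
      exact ih (T x) (s+1) hTx j (by omega)

lemma adjpow_eval_eq_zero (hp' : p ≠ ⊤)
    (h3 : ∀ n m : ℕ, m ≤ n → (T (lp.single p n 1) : ∀ _ : ℕ, ℂ) m = 0)
    (j n : ℕ) (hjn : j < n) : (adj p T ^ n) (eval p j) = 0 := by
  apply ext_singles p hp'
  intro m
  rw [adj_pow]
  simp only [ContinuousLinearMap.comp_apply, ContinuousLinearMap.zero_apply, eval_apply]
  exact pow_raise p T hp' h3 n (lp.single p m 1) m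
    (fun i hi => lp.single_apply_ne p m 1 (by omega)) j (by omega)

/-- The (dense) submodule of finitely supported functionals. -/
def Dspan : Submodule ℂ (lp (fun _ : ℕ => ℂ) p →L[ℂ] ℂ) :=
  Submodule.span ℂ (Set.range (eval p))

lemma reach_eval (hp' : p ≠ ⊤) (a w : ℕ → ℂ) (ha : ∀ n, a n ≠ 0) (hw : ∀ n, w n ≠ 0)
    (h1 : ∀ n : ℕ, (T (lp.single p n 1) : ∀ _ : ℕ, ℂ) (n + 1) = w n * a n / a (n + 1))
    (h3 : ∀ n m : ℕ, m ≤ n → (T (lp.single p n 1) : ∀ _ : ℕ, ℂ) m = 0) :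
    ∀ j, ∃ u ∈ Dspan p, adj p T u = eval p j := by
  intro j
  induction j using Nat.strong_induction_on with
  | _ j ih =>
    classical
    choose u hu using ih
    have hu'mem : ∀ m, (if h : m < j then u m h else 0) ∈ Dspan p := by
      intro m
      by_cases h : m < j
      · rw [dif_pos h]; exact (hu m h).1
      · rw [dif_neg h]; exact Submodule.zero_mem _
    have hu'adj : ∀ m, m < j →
        adj p T (if h : m < j then u m h else 0) = eval p m := by
      intro m h
      rw [dif_pos h]
      exact (hu m h).2
    have htne : w j * a j / a (j + 1) ≠ 0 :=
      div_ne_zero (mul_ne_zero (hw j) (ha j)) (ha (j + 1))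
    have hkey : adj p T (eval p (j + 1)) =
        (w j * a j / a (j + 1)) • eval p j +
          ∑ m ∈ Finset.range j,
            ((T (lp.single p m 1) : ∀ _ : ℕ, ℂ) (j + 1)) • eval p m := by
      apply ext_singles p hp'
      intro k
      have lhs : adj p T (eval p (j + 1)) (lp.single p k 1)
          = (T (lp.single p k 1) : ∀ _ : ℕ, ℂ) (j + 1) := rfl
      rw [lhs, ContinuousLinearMap.add_apply, ContinuousLinearMap.smul_apply,
        ContinuousLinearMap.sum_apply]
      simp only [ContinuousLinearMap.smul_apply, eval_single, smul_eq_mul, mul_ite, mul_one,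
        mul_zero, Finset.sum_ite_eq', Finset.mem_range]
      rcases lt_trichotomy k j with hk | rfl | hk
      · rw [if_neg (by omega : ¬ j = k), if_pos hk]
        simp
      · rw [if_pos rfl, if_neg (by omega : ¬ k < k), h1 k]
        simp
      · rw [if_neg (by omega : ¬ j = k), if_neg (by omega : ¬ k < j)]
        rw [h3 k (j+1) (by omega)]
        simp
    refine ⟨(w j * a j / a (j + 1))⁻¹ • (eval p (j + 1) -
        ∑ m ∈ Finset.range j, ((T (lp.single p m 1) : ∀ _ : ℕ, ℂ) (j + 1)) •
          (if h : m < j then u m h else 0)), ?_, ?_⟩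
    · refine Submodule.smul_mem _ _ (Submodule.sub_mem _ ?_ ?_)
      · exact Submodule.subset_span ⟨j + 1, rfl⟩
      · exact Submodule.sum_mem _ fun m hm => Submodule.smul_mem _ _ (hu'mem m)
    · rw [map_smul, map_sub, map_sum, hkey]
      have hterm : ∀ m ∈ Finset.range j,
          adj p T (((T (lp.single p m 1) : ∀ _ : ℕ, ℂ) (j + 1)) •
              (if h : m < j then u m h else 0)) =
            ((T (lp.single p m 1) : ∀ _ : ℕ, ℂ) (j + 1)) • eval p m := by
        intro m hm
        rw [map_smul, hu'adj m (Finset.mem_range.mp hm)]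
      rw [Finset.sum_congr rfl hterm, add_sub_cancel_right, smul_smul,
        inv_mul_cancel₀ htne, one_smul]

lemma reach_span_pow (hp' : p ≠ ⊤) (a w : ℕ → ℂ) (ha : ∀ n, a n ≠ 0) (hw : ∀ n, w n ≠ 0)
    (h1 : ∀ n : ℕ, (T (lp.single p n 1) : ∀ _ : ℕ, ℂ) (n + 1) = w n * a n / a (n + 1))
    (h3 : ∀ n m : ℕ, m ≤ n → (T (lp.single p n 1) : ∀ _ : ℕ, ℂ) m = 0) :
    ∀ (n : ℕ), ∀ ψ ∈ Dspan p, ∃ u ∈ Dspan p, (adj p T ^ n) u = ψ := by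
  have one : ∀ ψ ∈ Dspan p, ∃ u ∈ Dspan p, adj p T u = ψ := by
    intro ψ hψ
    induction hψ using Submodule.span_induction with
    | mem x hx =>
        obtain ⟨j, rfl⟩ := hx
        exact reach_eval p T hp' a w ha hw h1 h3 j
    | zero => exact ⟨0, Submodule.zero_mem _, map_zero _⟩
    | add x y hx hy ihx ihy =>
        obtain ⟨ux, hux, hux2⟩ := ihx
        obtain ⟨uy, huy, huy2⟩ := ihy
        exact ⟨ux + uy, Submodule.add_mem _ hux huy, by rw [map_add, hux2, huy2]⟩
    | smul c x hx ihx =>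
        obtain ⟨ux, hux, hux2⟩ := ihx
        exact ⟨c • ux, Submodule.smul_mem _ _ hux, by rw [map_smul, hux2]⟩
  intro n
  induction n with
  | zero => intro ψ hψ; exact ⟨ψ, hψ, by rw [pow_zero]; rfl⟩
  | succ n ih =>
      intro ψ hψ
      obtain ⟨u1, hu1, hu1a⟩ := one ψ hψ
      obtain ⟨u, hu, hua⟩ := ih u1 hu1
      refine ⟨u, hu, ?_⟩
      have : (adj p T ^ (n+1)) u = adj p T ((adj p T ^ n) u) := by
        rw [pow_succ']; rfl
      rw [this, hua, hu1a]

lemma nilpotent_span (hp' : p ≠ ⊤)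
    (h3 : ∀ n m : ℕ, m ≤ n → (T (lp.single p n 1) : ∀ _ : ℕ, ℂ) m = 0) :
    ∀ ψ ∈ Dspan p, ∃ N : ℕ, ∀ n, N ≤ n → (adj p T ^ n) ψ = 0 := by
  intro ψ hψ
  induction hψ using Submodule.span_induction with
  | mem x hx =>
      obtain ⟨j, rfl⟩ := hx
      exact ⟨j + 1, fun n hn => adjpow_eval_eq_zero p T hp' h3 j n (by omega)⟩
  | zero => exact ⟨0, fun n _ => map_zero _⟩
  | add x y hx hy ihx ihy =>
      obtain ⟨Nx, hNx⟩ := ihx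
      obtain ⟨Ny, hNy⟩ := ihy
      exact ⟨max Nx Ny, fun n hn => by
        rw [map_add, hNx n (by omega), hNy n (by omega), add_zero]⟩
  | smul c x hx ihx =>
      obtain ⟨N, hN⟩ := ihx
      refine ⟨N, fun n hn => ?_⟩
      rw [map_smul, hN n hn]
      exact smul_zero (A := lp (fun _ : ℕ => ℂ) p →L[ℂ] ℂ) c


section Density

variable {p}

/-- Finite-rank approximation in the dual of `ℓ^p`, `1 < p < ∞`. -/
lemma approx (hplt : 1 < p) (hp' : p ≠ ⊤) (f : lp (fun _ : ℕ => ℂ) p →L[ℂ] ℂ)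
    (ε : ℝ) (hε : 0 < ε) :
    ∃ N : ℕ, ‖f - ∑ n ∈ Finset.range N, f (lp.single p n 1) • eval p n‖ < ε := by
  classical
  have hpt1 : 1 < p.toReal := by
    have := ENNReal.toReal_strict_mono hp' hplt
    simpa using this
  have hpt0 : 0 < p.toReal := by linarith
  by_contra hcon
  push_neg at hcon
  set ε' : ℝ := ε / 2 with hε'
  have hε'0 : 0 < ε' := by positivity
  have hε'ε : ε' < ε := by rw [hε']; linarith
  -- Step A: for every N there is a finitely supported almost-norming vector living above N
  have hC : ∀ N : ℕ, ∃ (M : ℕ) (z : lp (fun _ : ℕ => ℂ) p), N ≤ M ∧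
      (∀ j, j < N → (z : ∀ _ : ℕ, ℂ) j = 0) ∧ (∀ j, M ≤ j → (z : ∀ _ : ℕ, ℂ) j = 0) ∧
      ‖z‖ ≤ 1 ∧ ε' < ‖f z‖ := by
    intro N
    set g : lp (fun _ : ℕ => ℂ) p →L[ℂ] ℂ :=
      f - ∑ n ∈ Finset.range N, f (lp.single p n 1) • eval p n with hg
    have hgsingle1 : ∀ n, n < N → g (lp.single p n 1) = 0 := by
      intro n hn
      rw [hg, ContinuousLinearMap.sub_apply, ContinuousLinearMap.sum_apply]
      have : ∀ m ∈ Finset.range N, (f (lp.single p m 1) • eval p m) (lp.single p n 1)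
          = if m = n then f (lp.single p n 1) else 0 := by
        intro m hm
        rw [ContinuousLinearMap.smul_apply, eval_single, smul_eq_mul]
        by_cases h : m = n
        · subst h; simp
        · simp [h]
      rw [Finset.sum_congr rfl this, Finset.sum_ite_eq' (Finset.range N) n
        (fun _ => f (lp.single p n 1)), if_pos (Finset.mem_range.mpr hn), sub_self]
    have hgsingle : ∀ n, n < N → ∀ c : ℂ, g (lp.single p n c) = 0 := by
      intro n hn c
      rw [single_eq_smul, map_smul, hgsingle1 n hn, smul_zero]
    have hgε : ε ≤ ‖g‖ := hcon N
    have : ¬ (∀ x, ‖g x‖ ≤ ε' * ‖x‖) := by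
      intro hle
      have := (ContinuousLinearMap.opNorm_le_iff hε'0.le).mpr hle
      linarith
    push_neg at this
    obtain ⟨x, hx⟩ := this
    have hxne : x ≠ 0 := by
      intro h0
      rw [h0, norm_zero, mul_zero, map_zero, norm_zero] at hx
      exact lt_irrefl 0 hx
    have hxn : 0 < ‖x‖ := norm_pos_iff.mpr hxne
    set x₁ : lp (fun _ : ℕ => ℂ) p := ((‖x‖⁻¹ : ℝ) : ℂ) • x with hx₁
    have hx₁norm : ‖x₁‖ = 1 := by
      rw [hx₁, norm_smul, Complex.norm_real, Real.norm_eq_abs,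
        abs_of_nonneg (inv_nonneg.mpr hxn.le), inv_mul_cancel₀ hxn.ne']
    have hgx₁ : ε' < ‖g x₁‖ := by
      rw [hx₁, map_smul, norm_smul, Complex.norm_real, Real.norm_eq_abs,
        abs_of_nonneg (inv_nonneg.mpr hxn.le)]
      rw [lt_inv_mul_iff₀ hxn]
      linarith [hx]
    set y : lp (fun _ : ℕ => ℂ) p :=
      x₁ - ∑ n ∈ Finset.range N, lp.single p n ((x₁ : ∀ _ : ℕ, ℂ) n) with hy
    have hycoord : ∀ j, (y : ∀ _ : ℕ, ℂ) j =
        (x₁ : ∀ _ : ℕ, ℂ) j - (if j ∈ Finset.range N then (x₁ : ∀ _ : ℕ, ℂ) j else 0) := by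
      intro j
      rw [hy, lp.coeFn_sub, Pi.sub_apply, coord_sum_singles]
    have hylow : ∀ j, j < N → (y : ∀ _ : ℕ, ℂ) j = 0 := by
      intro j hj
      rw [hycoord j, if_pos (Finset.mem_range.mpr hj), sub_self]
    have hynorm : ‖y‖ ≤ 1 := by
      have h1 : ‖y‖ ^ p.toReal ≤ 1 := by
        have h2 := lp.norm_compl_sum_single hpt0 x₁ (Finset.range N)
        rw [← hy] at h2
        have h3 : (0:ℝ) ≤ ∑ i ∈ Finset.range N, ‖(x₁ : ∀ _ : ℕ, ℂ) i‖ ^ p.toReal :=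
          Finset.sum_nonneg fun i _ => Real.rpow_nonneg (norm_nonneg _) _
        have h4 : ‖x₁‖ ^ p.toReal = 1 := by rw [hx₁norm, Real.one_rpow]
        linarith
      by_contra hy1
      push_neg at hy1
      have := (Real.one_lt_rpow_iff_of_pos (by linarith)).mpr (Or.inl ⟨hy1, hpt0⟩)
      linarith
    have hgy : g y = g x₁ := by
      rw [hy, map_sub, map_sum]
      have : ∀ n ∈ Finset.range N, g (lp.single p n ((x₁ : ∀ _ : ℕ, ℂ) n)) = 0 :=
        fun n hn => hgsingle n (Finset.mem_range.mp hn) _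
      rw [Finset.sum_congr rfl this, Finset.sum_const_zero, sub_zero]
    have hfy : f y = g y := by
      rw [hg, ContinuousLinearMap.sub_apply, ContinuousLinearMap.sum_apply]
      have : ∀ n ∈ Finset.range N, (f (lp.single p n 1) • eval p n) y = 0 := by
        intro n hn
        rw [ContinuousLinearMap.smul_apply, eval_apply, hylow n (Finset.mem_range.mp hn),
          smul_zero]
      rw [Finset.sum_congr rfl this, Finset.sum_const_zero, sub_zero]
    have hfy' : ε' < ‖f y‖ := by rw [hfy, hgy]; exact hgx₁
    -- truncate y
    have htend : Tendsto (fun M : ℕ => ∑ n ∈ Finset.range M, lp.single p n ((y : ∀ _ : ℕ, ℂ) n))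
        atTop (𝓝 y) := (lp.hasSum_single hp' y).tendsto_sum_nat
    have htend2 : Tendsto (fun M : ℕ =>
        ‖f (∑ n ∈ Finset.range M, lp.single p n ((y : ∀ _ : ℕ, ℂ) n))‖) atTop (𝓝 ‖f y‖) :=
      ((f.continuous.tendsto y).comp htend).norm
    have hev := (htend2.eventually (eventually_gt_nhds hfy')).and (eventually_ge_atTop N)
    obtain ⟨M, hM1, hM2⟩ := hev.exists
    refine ⟨M, ∑ n ∈ Finset.range M, lp.single p n ((y : ∀ _ : ℕ, ℂ) n), hM2, ?_, ?_, ?_, hM1⟩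
    · intro j hj
      rw [coord_sum_singles]
      by_cases h : j ∈ Finset.range M
      · rw [if_pos h]; exact hylow j hj
      · rw [if_neg h]
    · intro j hj
      rw [coord_sum_singles, if_neg (by simp; omega)]
    · have h1 : ‖∑ n ∈ Finset.range M, lp.single p n ((y : ∀ _ : ℕ, ℂ) n)‖ ^ p.toReal ≤ 1 := by
        have h2 := lp.norm_sum_single hpt0 (fun n => (y : ∀ _ : ℕ, ℂ) n) (Finset.range M)
        have h3 := lp.sum_rpow_le_norm_rpow hpt0 y (Finset.range M)
        have h4 : ‖y‖ ^ p.toReal ≤ 1 := Real.rpow_le_one (norm_nonneg _) hynorm hpt0.le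
        rw [h2]
        exact h3.trans h4
      by_contra hz1
      push_neg at hz1
      have := (Real.one_lt_rpow_iff_of_pos (by linarith)).mpr (Or.inl ⟨hz1, hpt0⟩)
      linarith
  -- Step B: blocks
  choose M z hNM hlow hhigh hznorm hfz using hC
  set F : ℕ → ℕ := fun k => Nat.rec 0 (fun _ acc => M acc) k with hF
  have hFsucc : ∀ k, F (k + 1) = M (F k) := fun _ => rfl
  have hFmono : Monotone F := monotone_nat_of_le_succ (fun k => by rw [hFsucc]; exact hNM (F k))
  have hfzne : ∀ k, f (z (F k)) ≠ 0 := by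
    intro k h0
    have := hfz (F k)
    rw [h0] at this
    simp at this
    linarith
  set c : ℕ → ℂ := fun k => ((‖f (z (F k))‖ : ℝ) : ℂ) / f (z (F k)) with hc
  have hcnorm : ∀ k, ‖c k‖ = 1 := by
    intro k
    rw [hc]
    have h0 : ‖f (z (F k))‖ ≠ 0 := norm_ne_zero_iff.mpr (hfzne k)
    rw [norm_div, Complex.norm_real, Real.norm_eq_abs, abs_of_nonneg (norm_nonneg _),
      div_self h0]
  set ζ : ℕ → lp (fun _ : ℕ => ℂ) p := fun k => c k • z (F k) with hζ
  have hfζ : ∀ k, f (ζ k) = ((‖f (z (F k))‖ : ℝ) : ℂ) := by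
    intro k
    rw [hζ]
    simp only [map_smul, smul_eq_mul, hc]
    rw [div_mul_cancel₀ _ (hfzne k)]
  have hζcoord : ∀ k j, (ζ k : ∀ _ : ℕ, ℂ) j = c k * (z (F k) : ∀ _ : ℕ, ℂ) j := by
    intro k j
    rw [hζ]
    simp [lp.coeFn_smul]
  -- the key estimate for each K
  have hKey : ∀ K : ℕ, (K : ℝ) * ε' ≤ ‖f‖ * (K : ℝ) ^ (p.toReal)⁻¹ := by
    intro K
    set x : lp (fun _ : ℕ => ℂ) p := ∑ k ∈ Finset.range K, ζ k with hxdef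
    have hxcoord : ∀ j, (x : ∀ _ : ℕ, ℂ) j = ∑ k ∈ Finset.range K, (ζ k : ∀ _ : ℕ, ℂ) j := by
      intro j
      rw [hxdef, lp.coeFn_sum, Finset.sum_apply]
    have hzero : ∀ j, F K ≤ j → (x : ∀ _ : ℕ, ℂ) j = 0 := by
      intro j hj
      rw [hxcoord]
      refine Finset.sum_eq_zero fun k hk => ?_
      rw [hζcoord, hhigh (F k) j ?_, mul_zero]
      calc M (F k) = F (k + 1) := (hFsucc k).symm
        _ ≤ F K := hFmono (Finset.mem_range.mp hk)
        _ ≤ j := hj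
    have hblock : ∀ k, k < K → ∀ j, F k ≤ j → j < F (k + 1) →
        (x : ∀ _ : ℕ, ℂ) j = (ζ k : ∀ _ : ℕ, ℂ) j := by
      intro k hk j hj1 hj2
      rw [hxcoord]
      refine Finset.sum_eq_single_of_mem k (Finset.mem_range.mpr hk) ?_
      intro i hi hne
      rw [hζcoord]
      rcases Ne.lt_or_gt hne with h | h
      · rw [hhigh (F i) j ?_, mul_zero]
        calc M (F i) = F (i + 1) := (hFsucc i).symm
          _ ≤ F k := hFmono h
          _ ≤ j := hj1
      · rw [hlow (F i) j ?_, mul_zero]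
        calc j < F (k + 1) := hj2
          _ ≤ F i := hFmono h
    have hxsum : x = ∑ j ∈ Finset.range (F K), lp.single p j ((x : ∀ _ : ℕ, ℂ) j) :=
      eq_sum_singles p x (F K) hzero
    have hxnormpt : ‖x‖ ^ p.toReal = ∑ j ∈ Finset.range (F K), ‖(x : ∀ _ : ℕ, ℂ) j‖ ^ p.toReal := by
      conv_lhs => rw [hxsum]
      exact lp.norm_sum_single hpt0 _ _
    have hsum : ∀ k, k ≤ K → ∑ j ∈ Finset.range (F k), ‖(x : ∀ _ : ℕ, ℂ) j‖ ^ p.toReal ≤ k := by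
      intro k
      induction k with
      | zero => intro _; simp [show F 0 = 0 from rfl]
      | succ k ih =>
          intro hk
          have hik := ih (by omega)
          have hsplit : ∑ j ∈ Finset.range (F (k+1)), ‖(x : ∀ _ : ℕ, ℂ) j‖ ^ p.toReal
              = (∑ j ∈ Finset.range (F k), ‖(x : ∀ _ : ℕ, ℂ) j‖ ^ p.toReal)
                + ∑ j ∈ Finset.Ico (F k) (F (k+1)), ‖(x : ∀ _ : ℕ, ℂ) j‖ ^ p.toReal := by
            rw [Finset.range_eq_Ico, Finset.range_eq_Ico,
              Finset.sum_Ico_consecutive _ (Nat.zero_le (F k)) (hFmono (Nat.le_add_right k 1))]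
          have hIco : ∑ j ∈ Finset.Ico (F k) (F (k+1)), ‖(x : ∀ _ : ℕ, ℂ) j‖ ^ p.toReal ≤ 1 := by
            have heq : ∀ j ∈ Finset.Ico (F k) (F (k+1)),
                ‖(x : ∀ _ : ℕ, ℂ) j‖ ^ p.toReal = ‖(z (F k) : ∀ _ : ℕ, ℂ) j‖ ^ p.toReal := by
              intro j hj
              obtain ⟨hj1, hj2⟩ := Finset.mem_Ico.mp hj
              rw [hblock k (by omega) j hj1 hj2, hζcoord, norm_mul, hcnorm, one_mul]
            rw [Finset.sum_congr rfl heq]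
            have h3 := lp.sum_rpow_le_norm_rpow hpt0 (z (F k)) (Finset.Ico (F k) (F (k+1)))
            have h4 : ‖z (F k)‖ ^ p.toReal ≤ 1 :=
              Real.rpow_le_one (norm_nonneg _) (hznorm (F k)) hpt0.le
            exact h3.trans h4
          rw [hsplit]
          push_cast
          linarith
    have hxpt : ‖x‖ ^ p.toReal ≤ (K : ℝ) := by
      rw [hxnormpt]
      exact hsum K le_rfl
    have hxnorm : ‖x‖ ≤ (K : ℝ) ^ (p.toReal)⁻¹ := by
      have h0 : ‖x‖ = (‖x‖ ^ p.toReal) ^ (p.toReal)⁻¹ :=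
        (Real.rpow_rpow_inv (norm_nonneg _) hpt0.ne').symm
      rw [h0]
      exact Real.rpow_le_rpow (Real.rpow_nonneg (norm_nonneg _) _) hxpt
        (inv_nonneg.mpr hpt0.le)
    have hfx : (K : ℝ) * ε' ≤ ‖f x‖ := by
      have h1 : f x = ((∑ k ∈ Finset.range K, ‖f (z (F k))‖ : ℝ) : ℂ) := by
        rw [hxdef, map_sum]
        rw [Finset.sum_congr rfl (fun k _ => hfζ k)]
        push_cast
        rfl
      rw [h1, Complex.norm_real, Real.norm_eq_abs,
        abs_of_nonneg (Finset.sum_nonneg fun k _ => norm_nonneg _)]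
      calc (K : ℝ) * ε' = ∑ _k ∈ Finset.range K, ε' := by
            rw [Finset.sum_const, Finset.card_range, nsmul_eq_mul]
        _ ≤ ∑ k ∈ Finset.range K, ‖f (z (F k))‖ :=
            Finset.sum_le_sum fun k _ => (hfz (F k)).le
    calc (K : ℝ) * ε' ≤ ‖f x‖ := hfx
      _ ≤ ‖f‖ * ‖x‖ := f.le_opNorm x
      _ ≤ ‖f‖ * (K : ℝ) ^ (p.toReal)⁻¹ :=
          mul_le_mul_of_nonneg_left hxnorm (norm_nonneg f)
  -- contradiction
  have hexp : 0 < 1 - (p.toReal)⁻¹ := by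
    have : (p.toReal)⁻¹ < 1 := by
      rw [inv_lt_one_iff₀]
      right; exact hpt1
    linarith
  have htendK : Tendsto (fun K : ℕ => (K : ℝ) ^ (1 - (p.toReal)⁻¹)) atTop atTop :=
    (tendsto_rpow_atTop hexp).comp tendsto_natCast_atTop_atTop
  obtain ⟨K, hK1, hK2⟩ :=
    ((htendK.eventually_gt_atTop (‖f‖ / ε')).and (eventually_ge_atTop 1)).exists
  have hK0 : (0 : ℝ) < (K : ℝ) := by exact_mod_cast hK2
  have hsplitK : ((K : ℝ)) = (K : ℝ) ^ (p.toReal)⁻¹ * (K : ℝ) ^ (1 - (p.toReal)⁻¹) := by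
    rw [← Real.rpow_add hK0]
    norm_num
  have hKpos : (0 : ℝ) < (K : ℝ) ^ (p.toReal)⁻¹ := Real.rpow_pos_of_pos hK0 _
  have h5 : (K : ℝ) ^ (1 - (p.toReal)⁻¹) * ε' ≤ ‖f‖ := by
    have h := hKey K
    nth_rewrite 1 [hsplitK] at h
    rw [mul_assoc, mul_comm ‖f‖] at h
    exact le_of_mul_le_mul_left h hKpos
  have h6 : ‖f‖ < (K : ℝ) ^ (1 - (p.toReal)⁻¹) * ε' := by
    rw [div_lt_iff₀ hε'0] at hK1
    exact hK1
  linarith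

lemma dense_Dspan (hplt : 1 < p) (hp' : p ≠ ⊤) :
    Dense ((Dspan p : Submodule ℂ (lp (fun _ : ℕ => ℂ) p →L[ℂ] ℂ)) :
      Set (lp (fun _ : ℕ => ℂ) p →L[ℂ] ℂ)) := by
  rw [Metric.dense_iff]
  intro f r hr
  obtain ⟨N, hN⟩ := approx hplt hp' f r hr
  refine ⟨∑ n ∈ Finset.range N, f (lp.single p n 1) • eval p n, ?_, ?_⟩
  · rw [Metric.mem_ball, dist_comm, dist_eq_norm]
    exact hN
  · exact Submodule.sum_mem _ fun n _ =>
      Submodule.smul_mem _ _ (Submodule.subset_span ⟨n, rfl⟩)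

end Density


lemma orbit_open_dense (hp' : p ≠ ⊤) (a w : ℕ → ℂ) (ha : ∀ n, a n ≠ 0) (hw : ∀ n, w n ≠ 0)
    (h1 : ∀ n : ℕ, (T (lp.single p n 1) : ∀ _ : ℕ, ℂ) (n + 1) = w n * a n / a (n + 1))
    (h3 : ∀ n m : ℕ, m ≤ n → (T (lp.single p n 1) : ∀ _ : ℕ, ℂ) m = 0)
    (hDdense : Dense ((Dspan p : Submodule ℂ (lp (fun _ : ℕ => ℂ) p →L[ℂ] ℂ)) :
      Set (lp (fun _ : ℕ => ℂ) p →L[ℂ] ℂ)))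
    (V : Set (lp (fun _ : ℕ => ℂ) p →L[ℂ] ℂ)) (hVo : IsOpen V) (hVne : V.Nonempty) :
    Dense (⋃ (c : ℂ) (n : ℕ),
      (fun ψ : lp (fun _ : ℕ => ℂ) p →L[ℂ] ℂ => c • (adj p T ^ n) ψ) ⁻¹' V) := by
  rw [dense_iff_inter_open]
  intro U hU hUne
  obtain ⟨x', hx'D, hx'U⟩ := hDdense.exists_mem_open hU hUne
  obtain ⟨y, hyD, hyV⟩ := hDdense.exists_mem_open hVo hVne
  obtain ⟨N, hN⟩ := nilpotent_span p T hp' h3 x' hx'D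
  obtain ⟨u, huD, huA⟩ := reach_span_pow p T hp' a w ha hw h1 h3 N y hyD
  by_cases hu0 : u = 0
  · have hy0 : y = 0 := by rw [← huA, hu0, map_zero]
    refine ⟨x', hx'U, ?_⟩
    refine Set.mem_iUnion.mpr ⟨0, Set.mem_iUnion.mpr ⟨0, ?_⟩⟩
    show (0 : ℂ) • (adj p T ^ 0) x' ∈ V
    have h00 : (0 : ℂ) • (adj p T ^ 0) x' = y := by
      rw [hy0]
      exact zero_smul ℂ ((adj p T ^ 0) x')
    rw [h00]
    exact hyV
  · obtain ⟨r, hr, hball⟩ := Metric.isOpen_iff.mp hU x' hx'U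
    have hun : 0 < ‖u‖ := norm_pos_iff.mpr hu0
    have hδ0 : 0 < r / 2 / ‖u‖ := by positivity
    set δc : ℂ := ((r / 2 / ‖u‖ : ℝ) : ℂ) with hδcdef
    have hδc : δc ≠ 0 := Complex.ofReal_ne_zero.mpr hδ0.ne'
    set ψ : lp (fun _ : ℕ => ℂ) p →L[ℂ] ℂ := x' + δc • u with hψdef
    have hψU : ψ ∈ U := by
      apply hball
      rw [Metric.mem_ball, dist_eq_norm]
      have h9 : ψ - x' = δc • u := by rw [hψdef]; abel
      rw [h9]
      have hns : ‖δc • u‖ = ‖δc‖ * ‖u‖ := norm_smul δc u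
      rw [hns, hδcdef, Complex.norm_real, Real.norm_eq_abs, abs_of_pos hδ0]
      have hh : r / 2 / ‖u‖ * ‖u‖ = r / 2 := by field_simp
      rw [hh]
      linarith
    refine ⟨ψ, hψU, ?_⟩
    have hstep : δc⁻¹ • (adj p T ^ N) ψ = y := by
      rw [hψdef, map_add, map_smul, hN N le_rfl, huA, zero_add, smul_smul,
        inv_mul_cancel₀ hδc, one_smul]
    refine Set.mem_iUnion.mpr ⟨δc⁻¹, Set.mem_iUnion.mpr ⟨N, ?_⟩⟩
    show δc⁻¹ • (adj p T ^ N) ψ ∈ V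
    rw [hstep]
    exact hyV

end AdjointSupercyclicAux

open AdjointSupercyclicAux in
/-- **Supercyclicity of `F_w^*`.**  The adjoint `T* : φ ↦ φ ∘ T` of a bounded weighted
forward shift on `ℓ^p(ℕ)` is always supercyclic: some `φ` in the dual has projective orbit
`{c·(T*)^n φ : c ∈ ℂ, n ∈ ℕ}` that is norm-dense in the dual. -/
theorem adjoint_forward_shift_supercyclic (p : ℝ≥0∞) [Fact (1 ≤ p)]
    (hp : 1 < p) (hp' : p ≠ ⊤)
    (a b w : ℕ → ℂ) (ha : ∀ n, a n ≠ 0) (hb : ∀ n, b n ≠ 0) (hw : ∀ n, w n ≠ 0)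
    (T : lp (fun _ : ℕ => ℂ) p →L[ℂ] lp (fun _ : ℕ => ℂ) p)
    (hT : RepresentsFw p a b w T) :
    ∃ φ : lp (fun _ : ℕ => ℂ) p →L[ℂ] ℂ,
      Dense (Set.range fun cn : ℂ × ℕ => cn.1 • φ.comp (T ^ cn.2)) := by
  classical
  obtain ⟨h1, h2, h3⟩ := hT
  have hDdense : Dense ((Dspan p : Submodule ℂ (lp (fun _ : ℕ => ℂ) p →L[ℂ] ℂ)) :
      Set (lp (fun _ : ℕ => ℂ) p →L[ℂ] ℂ)) := dense_Dspan hp hp'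
  -- the dual is separable, hence second countable
  haveI hsep : TopologicalSpace.SeparableSpace (lp (fun _ : ℕ => ℂ) p →L[ℂ] ℂ) := by
    rw [← TopologicalSpace.isSeparable_univ_iff]
    have h0 : TopologicalSpace.IsSeparable (Set.range (eval p)) :=
      (Set.countable_range _).isSeparable
    have h1' : TopologicalSpace.IsSeparable
        ((Submodule.span ℂ (Set.range (eval p)) : Submodule ℂ _) :
          Set (lp (fun _ : ℕ => ℂ) p →L[ℂ] ℂ)) := h0.span
    have h2' := h1'.closure
    have h3' : closure ((Submodule.span ℂ (Set.range (eval p)) : Submodule ℂ _) :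
        Set (lp (fun _ : ℕ => ℂ) p →L[ℂ] ℂ)) = Set.univ := hDdense.closure_eq
    rwa [h3'] at h2'
  haveI : SecondCountableTopology (lp (fun _ : ℕ => ℂ) p →L[ℂ] ℂ) :=
    UniformSpace.secondCountable_of_separable _
  obtain ⟨B, hBc, hBne, hB⟩ :=
    TopologicalSpace.exists_countable_basis (lp (fun _ : ℕ => ℂ) p →L[ℂ] ℂ)
  -- the projective-orbit open sets
  set O : Set (lp (fun _ : ℕ => ℂ) p →L[ℂ] ℂ) → Set (lp (fun _ : ℕ => ℂ) p →L[ℂ] ℂ) :=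
    fun V => ⋃ (c : ℂ) (n : ℕ), (fun ψ => c • (adj p T ^ n) ψ) ⁻¹' V with hO
  have hOopen : ∀ V ∈ B, IsOpen (O V) := by
    intro V hV
    refine isOpen_iUnion fun c => isOpen_iUnion fun n => ?_
    exact (hB.isOpen hV).preimage (((adj p T ^ n).continuous).const_smul c)
  have hOdense : ∀ V ∈ B, Dense (O V) := by
    intro V hV
    have hVne : V.Nonempty := Set.nonempty_iff_ne_empty.mpr (by rintro rfl; exact hBne hV)
    exact orbit_open_dense p T hp' a w ha hw h1 h3 hDdense V (hB.isOpen hV) hVne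
  have hdense := dense_biInter_of_isOpen hOopen hBc hOdense
  obtain ⟨φ, hφ⟩ := hdense.nonempty
  refine ⟨φ, ?_⟩
  rw [hB.dense_iff]
  intro o ho hone
  have hφo : φ ∈ O o := Set.mem_iInter₂.mp hφ o ho
  obtain ⟨c, hc⟩ := Set.mem_iUnion.mp hφo
  obtain ⟨n, hn⟩ := Set.mem_iUnion.mp hc
  refine ⟨c • (adj p T ^ n) φ, hn, ⟨(c, n), ?_⟩⟩
  show c • φ.comp (T ^ n) = c • (adj p T ^ n) φ
  rw [adj_pow p T n φ]
end
end

section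
/- Let E be a complex Banach space of analytic functions on the open unit disc B(0,1) (via an injective linear map J with continuous point evaluations), whose dual E* is norm-separable, and such that the Taylor-coefficient functionals {k_n : n ≥ 0} are linearly independent and their linear span is norm-dense in E*. Let w : ℕ → ℂ with w_n ≠ 0 for all n, and let T : E → E be a continuous linear operator which is the weighted forward shift with weights w (the 0-th Taylor coefficient of J(Tf) is 0 and the n-th coefficient of J(Tf) is w_{n−1} times the (n−1)-th coefficient of Jf, for all f and n ≥ 1). Then: (i) if inf_{n ≥ 0} ( ‖k_n‖ / ∏_{k=0}^{n−1}|w_k| ) = 0, the adjoint T* is hypercyclic on E*; (ii) if lim_{n→∞} ( ‖k_n‖ / ∏_{k=0}^{n−1}|w_k| ) = 0, the adjoint T* is topologically mixing on E*. -/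
open Filter Finset Topology

set_option maxHeartbeats 2000000
set_option synthInstance.maxHeartbeats 400000

/-- **Hypercyclicity and mixing of `F_w^*` on a general space of analytic functions.**
Let `E` be a complex Banach space of analytic functions on the unit disc (via an injective
linear map `J` with continuous point evaluations), with norm-separable dual, linearly
independent Taylor-coefficient functionals `k_n` whose span is norm-dense in `E*`, and let
`T` be a bounded weighted forward shift with nonzero weights `w`.  Then:
(i) if `inf_n ‖k_n‖/∏_{k<n}|w_k| = 0`, the adjoint `T*` is hypercyclic;
(ii) if `‖k_n‖/∏_{k<n}|w_k| → 0`, the adjoint `T*` is topologically mixing. -/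
theorem adjoint_shift_hypercyclic_mixing_general
    {E : Type*} [NormedAddCommGroup E] [NormedSpace ℂ E] [CompleteSpace E]
    [TopologicalSpace.SeparableSpace (StrongDual ℂ E)]
    (J : E →ₗ[ℂ] (ℂ → ℂ))
    (hJa : ∀ f : E, ∀ z ∈ Metric.ball (0 : ℂ) 1, AnalyticAt ℂ (J f) z)
    (hJc : ∀ z ∈ Metric.ball (0 : ℂ) 1, Continuous fun f : E => J f z)
    (hJinj : Function.Injective J)
    (K : ℕ → StrongDual ℂ E)
    (hK : ∀ (n : ℕ) (f : E), K n f = iteratedDeriv n (J f) 0 / (n.factorial : ℂ))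
    (hKli : LinearIndependent ℂ K)
    (hKdense : Dense ((Submodule.span ℂ (Set.range K) :
      Submodule ℂ (StrongDual ℂ E)) : Set (StrongDual ℂ E)))
    (w : ℕ → ℂ) (hw : ∀ n, w n ≠ 0) (T : E →L[ℂ] E)
    (hT0 : ∀ f : E, iteratedDeriv 0 (J (T f)) 0 / ((0 : ℕ).factorial : ℂ) = 0)
    (hTshift : ∀ (f : E) (n : ℕ),
      iteratedDeriv (n + 1) (J (T f)) 0 / ((n + 1).factorial : ℂ) =
        w n * (iteratedDeriv n (J f) 0 / (n.factorial : ℂ))) :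
    ((⨅ n : ℕ, ‖K n‖ / ∏ k ∈ Finset.range n, ‖w k‖) = 0 →
      ∃ φ : StrongDual ℂ E, Dense (Set.range fun n : ℕ => φ.comp (T ^ n))) ∧
    (Tendsto (fun n : ℕ => ‖K n‖ / ∏ k ∈ Finset.range n, ‖w k‖) atTop (𝓝 0) →
      ∀ U V : Set (StrongDual ℂ E),
        IsOpen U → IsOpen V → U.Nonempty → V.Nonempty →
        ∃ N : ℕ, ∀ n ≥ N,
          ((fun φ : StrongDual ℂ E => φ.comp (T ^ n)) '' U ∩ V).Nonempty) := by
  classical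
  set a : ℕ → ℝ := fun n => ‖K n‖ / ∏ k ∈ Finset.range n, ‖w k‖ with ha_def
  -- the adjoint operator
  set A : StrongDual ℂ E →L[ℂ] StrongDual ℂ E :=
    (ContinuousLinearMap.compL ℂ E E ℂ).flip T with hA_def
  have hAapp : ∀ (φ : StrongDual ℂ E) (f : E), A φ f = φ (T f) := fun _ _ => rfl
  have hA0 : A (K 0) = 0 := by
    ext f
    show K 0 (T f) = 0
    rw [hK]; exact hT0 f
  have hAs : ∀ n, A (K (n + 1)) = w n • K n := by
    intro n; ext f
    show K (n + 1) (T f) = w n * K n f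
    rw [hK, hK, hTshift]
  have hpow : ∀ (n : ℕ) (φ : StrongDual ℂ E), (A ^ n) φ = φ.comp (T ^ n) := by
    intro n
    induction n with
    | zero => intro φ; simp [pow_zero, ContinuousLinearMap.one_def]
    | succ n ih =>
      intro φ
      rw [pow_succ, ContinuousLinearMap.mul_apply, ih (A φ), pow_succ']
      ext f
      simp [hAapp, ContinuousLinearMap.mul_apply]
  -- iterates on the basis vectors
  have hAm : ∀ (n m : ℕ), (A ^ n) (K (m + n)) = (∏ k ∈ Finset.Ico m (m + n), w k) • K m := by
    intro n
    induction n with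
    | zero => intro m; simp
    | succ n ih =>
      intro m
      rw [pow_succ, ContinuousLinearMap.mul_apply, show m + (n + 1) = (m + n) + 1 from rfl,
        hAs (m + n), map_smul, ih m, smul_smul,
        Finset.prod_Ico_succ_top (Nat.le_add_right m n), mul_comm]
  have hann : ∀ m, (A ^ (m + 1)) (K m) = 0 := by
    intro m
    induction m with
    | zero => rw [pow_one]; exact hA0
    | succ m ih =>
      rw [pow_succ, ContinuousLinearMap.mul_apply, hAs m, map_smul, ih]; ext; simp
  have hA_zero : ∀ m n : ℕ, m < n → (A ^ n) (K m) = 0 := by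
    intro m n h
    obtain ⟨j, rfl⟩ : ∃ j, n = j + (m + 1) := ⟨n - (m + 1), by omega⟩
    rw [pow_add, ContinuousLinearMap.mul_apply, hann, map_zero]
  -- positivity
  have hprodpos : ∀ n, (0 : ℝ) < ∏ k ∈ Finset.range n, ‖w k‖ :=
    fun n => Finset.prod_pos fun k _ => norm_pos_iff.mpr (hw k)
  have hapos : ∀ n, 0 < a n := fun n =>
    div_pos (norm_pos_iff.mpr (hKli.ne_zero n)) (hprodpos n)
  set C : ℝ := max 1 ‖A‖ with hC_def
  have hC1 : (1 : ℝ) ≤ C := le_max_left _ _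
  have hC0 : (0 : ℝ) ≤ C := le_trans zero_le_one hC1
  have hstep : ∀ n, a n ≤ C * a (n + 1) := by
    intro n
    have h1 : ‖w n • K n‖ ≤ ‖A‖ * ‖K (n + 1)‖ := by
      rw [← hAs n]; exact A.le_opNorm _
    have h2 : ‖w n‖ * ‖K n‖ ≤ C * ‖K (n + 1)‖ := by
      rw [← norm_smul]
      exact h1.trans (mul_le_mul_of_nonneg_right (le_max_right _ _) (norm_nonneg _))
    have hwpos : 0 < ‖w n‖ := norm_pos_iff.mpr (hw n)
    have : a n = ‖K n‖ / ∏ k ∈ Finset.range n, ‖w k‖ := rfl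
    rw [this, show a (n + 1) = ‖K (n + 1)‖ / ∏ k ∈ Finset.range (n + 1), ‖w k‖ from rfl,
      Finset.prod_range_succ, mul_div_assoc' C,
      div_le_div_iff₀ (hprodpos n) (mul_pos (hprodpos n) hwpos)]
    nlinarith [mul_le_mul_of_nonneg_right h2 (le_of_lt (hprodpos n)), hprodpos n]
  have hiter : ∀ (i n : ℕ), a n ≤ C ^ i * a (n + i) := by
    intro i
    induction i with
    | zero => intro n; simp
    | succ i ih =>
      intro n
      calc a n ≤ C ^ i * a (n + i) := ih n
        _ ≤ C ^ i * (C * a (n + i + 1)) :=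
            mul_le_mul_of_nonneg_left (hstep (n + i)) (pow_nonneg hC0 i)
        _ = C ^ (i + 1) * a (n + (i + 1)) := by ring_nf
  -- the approximate right inverse vectors
  set u : ℕ → ℕ → StrongDual ℂ E :=
    fun n m => (∏ k ∈ Finset.Ico m (m + n), w k)⁻¹ • K (m + n) with hu_def
  have hprodne : ∀ n m : ℕ, (∏ k ∈ Finset.Ico m (m + n), w k) ≠ 0 :=
    fun n m => Finset.prod_ne_zero_iff.mpr fun k _ => hw k
  have hAu : ∀ n m, (A ^ n) (u n m) = K m := by
    intro n m
    rw [hu_def]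
    simp only [map_smul, hAm n m, smul_smul, inv_mul_cancel₀ (hprodne n m), one_smul]
  have hunorm : ∀ n m, ‖u n m‖ =
      (∏ k ∈ Finset.range m, ‖w k‖) * a (m + n) := by
    intro n m
    have hIco : (∏ k ∈ Finset.range m, ‖w k‖) *
        ∏ k ∈ Finset.Ico m (m + n), ‖w k‖ =
        ∏ k ∈ Finset.range (m + n), ‖w k‖ :=
      Finset.prod_range_mul_prod_Ico _ (Nat.le_add_right m n)
    have habs : ‖(∏ k ∈ Finset.Ico m (m + n), w k)⁻¹‖ =
        (∏ k ∈ Finset.Ico m (m + n), ‖w k‖)⁻¹ := by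
      rw [norm_inv, norm_prod]
    rw [hu_def]
    simp only [norm_smul, habs]
    have hIpos : (0:ℝ) < ∏ k ∈ Finset.Ico m (m + n), ‖w k‖ :=
      Finset.prod_pos fun k _ => norm_pos_iff.mpr (hw k)
    have : a (m + n) = ‖K (m + n)‖ / ∏ k ∈ Finset.range (m + n), ‖w k‖ := rfl
    have hPne : (∏ k ∈ Finset.range m, ‖w k‖) ≠ 0 := ne_of_gt (hprodpos m)
    rw [this, ← hIco, ← mul_div_assoc, mul_div_mul_left _ _ hPne, div_eq_inv_mul]
  -- representations of elements of open sets
  have hrep : ∀ S : Set (StrongDual ℂ E), IsOpen S → S.Nonempty →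
      ∃ c : ℕ →₀ ℂ, (c.sum fun m z => z • K m) ∈ S := by
    intro S hS hSne
    obtain ⟨x, hx, hxS⟩ := hKdense.exists_mem_open hS hSne
    obtain ⟨c, hc⟩ := Finsupp.mem_span_range_iff_exists_finsupp.mp hx
    exact ⟨c, hc ▸ hxS⟩
  -- the correction vectors
  have hAxi : ∀ (d : ℕ →₀ ℂ) (n : ℕ),
      (A ^ n) (d.sum fun m z => z • u n m) = d.sum fun m z => z • K m := by
    intro d n
    rw [map_finsuppSum (A ^ n) d fun m z => z • u n m]
    exact Finsupp.sum_congr fun m _ => by rw [map_smul, hAu]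
  have hxinorm : ∀ (d : ℕ →₀ ℂ) (n : ℕ),
      ‖d.sum fun m z => z • u n m‖ ≤
        ∑ m ∈ d.support, (‖d m‖ * ∏ k ∈ Finset.range m, ‖w k‖) * a (m + n) := by
    intro d n
    rw [Finsupp.sum]
    refine (norm_sum_le _ _).trans (Finset.sum_le_sum fun m _ => ?_)
    rw [norm_smul, hunorm, ← mul_assoc]
  -- vanishing of iterates on span elements
  have hvanish : ∀ (c : ℕ →₀ ℂ) (n : ℕ), (∀ m ∈ c.support, m < n) →
      (A ^ n) (c.sum fun m z => z • K m) = 0 := by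
    intro c n hn
    rw [map_finsuppSum (A ^ n) c fun m z => z • K m, Finsupp.sum]
    apply Finset.sum_eq_zero
    intro m hm
    rw [map_smul, hA_zero m n (hn m hm)]; ext; simp
  constructor
  · -- part (i)
    intro h1
    have hsmall : ∀ ε : ℝ, 0 < ε → ∀ N : ℕ, ∃ n, N ≤ n ∧ a n < ε := by
      intro ε hε N
      by_contra hcon
      push_neg at hcon
      set s : Finset ℝ := insert ε ((Finset.range N).image a) with hs_def
      have hsne : s.Nonempty := ⟨ε, Finset.mem_insert_self _ _⟩
      have hδpos : 0 < s.min' hsne := by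
        have := s.min'_mem hsne
        rcases Finset.mem_insert.mp this with h | h
        · rw [h]; exact hε
        · obtain ⟨k, -, hk⟩ := Finset.mem_image.mp h
          rw [← hk]; exact hapos k
      have hle : ∀ n, s.min' hsne ≤ a n := by
        intro n
        rcases lt_or_ge n N with h' | h'
        · exact Finset.min'_le _ _ (Finset.mem_insert_of_mem
            (Finset.mem_image_of_mem a (Finset.mem_range.mpr h')))
        · exact (Finset.min'_le _ _ (Finset.mem_insert_self _ _)).trans (hcon n h')
      have := le_ciInf hle
      rw [h1] at this
      linarith
    -- topological transitivity
    have htrans : ∀ U V : Set (StrongDual ℂ E), IsOpen U → IsOpen V →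
        U.Nonempty → V.Nonempty → ∃ (n : ℕ) (φ : StrongDual ℂ E),
          φ ∈ U ∧ (A ^ n) φ ∈ V := by
      intro U V hU hV hUne hVne
      obtain ⟨c, hcU⟩ := hrep U hU hUne
      obtain ⟨d, hdV⟩ := hrep V hV hVne
      set φ0 : StrongDual ℂ E := c.sum fun m z => z • K m with hφ0
      obtain ⟨r, hr, hball⟩ := Metric.isOpen_iff.mp hU φ0 hcU
      set M : ℕ := max (c.support.sup id) (d.support.sup id) + 1 with hM_def
      have hcM : ∀ m ∈ c.support, m < M := by
        intro m hm
        have : m ≤ c.support.sup id := Finset.le_sup (f := id) hm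
        omega
      have hdM : ∀ m ∈ d.support, m < M := by
        intro m hm
        have : m ≤ d.support.sup id := Finset.le_sup (f := id) hm
        omega
      set G : ℝ := (∑ m ∈ d.support, ‖d m‖ * ∏ k ∈ Finset.range m, ‖w k‖) * C ^ M + 1
        with hG_def
      have hGpos : 0 < G := by
        have h0 : 0 ≤ ∑ m ∈ d.support, ‖d m‖ * ∏ k ∈ Finset.range m, ‖w k‖ :=
          Finset.sum_nonneg fun m _ =>
            mul_nonneg (norm_nonneg _) (le_of_lt (hprodpos m))
        have := pow_nonneg hC0 M
        nlinarith
      obtain ⟨j, hjM, hja⟩ := hsmall (r / G) (div_pos hr hGpos) (2 * M)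
      set n : ℕ := j - M with hn_def
      have hnM : M ≤ n := by omega
      have hξ : ‖d.sum fun m z => z • u n m‖ < r := by
        refine lt_of_le_of_lt (hxinorm d n) ?_
        have hbound : ∀ m ∈ d.support,
            (‖d m‖ * ∏ k ∈ Finset.range m, ‖w k‖) * a (m + n) ≤
            (‖d m‖ * ∏ k ∈ Finset.range m, ‖w k‖) * (C ^ M * a j) := by
          intro m hm
          have hmM : m < M := hdM m hm
          have hkey : a (m + n) ≤ C ^ (M - m) * a j := by
            have := hiter (M - m) (m + n)
            rwa [show m + n + (M - m) = j by omega] at this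
          have hpowle : C ^ (M - m) ≤ C ^ M := pow_le_pow_right₀ hC1 (by omega)
          have : a (m + n) ≤ C ^ M * a j :=
            hkey.trans (mul_le_mul_of_nonneg_right hpowle (le_of_lt (hapos j)))
          exact mul_le_mul_of_nonneg_left this
            (mul_nonneg (norm_nonneg _) (le_of_lt (hprodpos m)))
        refine lt_of_le_of_lt (Finset.sum_le_sum hbound) ?_
        rw [← Finset.sum_mul, ← mul_assoc]
        have hle1 : (∑ m ∈ d.support, ‖d m‖ * ∏ k ∈ Finset.range m, ‖w k‖) * C ^ M
            ≤ G := by rw [hG_def]; linarith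
        calc (∑ m ∈ d.support, ‖d m‖ * ∏ k ∈ Finset.range m, ‖w k‖) * C ^ M * a j
            ≤ G * a j := mul_le_mul_of_nonneg_right hle1 (le_of_lt (hapos j))
          _ < G * (r / G) := by
              exact mul_lt_mul_of_pos_left hja hGpos
          _ = r := by field_simp
      refine ⟨n, φ0 + d.sum fun m z => z • u n m, ?_, ?_⟩
      · apply hball
        rw [Metric.mem_ball, dist_eq_norm, add_sub_cancel_left]
        exact hξ
      · rw [map_add, hAxi, hvanish c n fun m hm => lt_of_lt_of_le (hcM m hm) hnM, zero_add]
        exact hdV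
    -- Baire category argument
    haveI : SecondCountableTopology (StrongDual ℂ E) :=
      UniformSpace.secondCountable_of_separable _
    obtain ⟨B, hBc, hBne, hB⟩ := TopologicalSpace.exists_countable_basis (StrongDual ℂ E)
    haveI : Countable B := hBc.to_subtype
    have hGopen : ∀ V : B, IsOpen (⋃ n : ℕ, (fun φ => (A ^ n) φ) ⁻¹' V.1) :=
      fun V => isOpen_iUnion fun n => (hB.isOpen V.2).preimage (A ^ n).continuous
    have hGdense : ∀ V : B, Dense (⋃ n : ℕ, (fun φ => (A ^ n) φ) ⁻¹' V.1) := by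
      intro V
      rw [dense_iff_inter_open]
      intro U hU hUne
      have hVne : V.1.Nonempty := by
        rcases Set.eq_empty_or_nonempty V.1 with h | h
        · have hmem := V.2
          rw [h] at hmem
          exact absurd hmem hBne
        · exact h
      obtain ⟨n, φ, hφU, hφV⟩ := htrans U V hU (hB.isOpen V.2) hUne hVne
      exact ⟨φ, hφU, Set.mem_iUnion.mpr ⟨n, hφV⟩⟩
    have hdense := dense_iInter_of_isOpen hGopen hGdense
    obtain ⟨φ, hφ⟩ := hdense.nonempty
    refine ⟨φ, ?_⟩
    rw [dense_iff_inter_open]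
    intro O hO hOne
    obtain ⟨x, hx⟩ := hOne
    obtain ⟨V, hVB, hxV, hVO⟩ := hB.exists_subset_of_mem_open hx hO
    have hφV := Set.mem_iInter.mp hφ ⟨V, hVB⟩
    obtain ⟨n, hn⟩ := Set.mem_iUnion.mp hφV
    exact ⟨φ.comp (T ^ n), hVO ((hpow n φ) ▸ hn), Set.mem_range_self n⟩
  · -- part (ii)
    intro h2 U V hU hV hUne hVne
    obtain ⟨c, hcU⟩ := hrep U hU hUne
    obtain ⟨d, hdV⟩ := hrep V hV hVne
    set φ0 : StrongDual ℂ E := c.sum fun m z => z • K m with hφ0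
    set M : ℕ := c.support.sup id + 1 with hM_def
    have hcM : ∀ m ∈ c.support, m < M := by
      intro m hm
      have : m ≤ c.support.sup id := Finset.le_sup (f := id) hm
      omega
    -- the correction tends to zero
    have hξtend : Tendsto (fun n => d.sum fun m z => z • u n m) atTop (𝓝 0) := by
      rw [tendsto_zero_iff_norm_tendsto_zero]
      refine squeeze_zero (fun n => norm_nonneg _) (fun n => hxinorm d n) ?_
      have : Tendsto (fun n => ∑ m ∈ d.support,
          (‖d m‖ * ∏ k ∈ Finset.range m, ‖w k‖) * a (m + n)) atTop
          (𝓝 (∑ m ∈ d.support, (0 : ℝ))) := by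
        refine tendsto_finset_sum _ fun m _ => ?_
        have hshift : Tendsto (fun n => a (m + n)) atTop (𝓝 0) := by
          have := h2.comp (tendsto_add_atTop_nat m)
          simpa [Function.comp_def, add_comm] using this
        simpa using hshift.const_mul (‖d m‖ * ∏ k ∈ Finset.range m, ‖w k‖)
      simpa using this
    have hmemU : ∀ᶠ n in atTop, φ0 + (d.sum fun m z => z • u n m) ∈ U := by
      have : Tendsto (fun n => φ0 + (d.sum fun m z => z • u n m)) atTop (𝓝 φ0) := by
        simpa using (tendsto_const_nhds (x := φ0)).add hξtend
      exact this.eventually_mem (hU.mem_nhds hcU)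
    have hmemV : ∀ᶠ n in atTop, (A ^ n) (φ0 + (d.sum fun m z => z • u n m)) ∈ V := by
      filter_upwards [eventually_ge_atTop M] with n hn
      rw [map_add, hAxi, hvanish c n fun m hm => lt_of_lt_of_le (hcM m hm) hn, zero_add]
      exact hdV
    obtain ⟨N, hN⟩ := (hmemU.and hmemV).exists_forall_of_atTop
    refine ⟨N, fun n hn => ?_⟩
    obtain ⟨h1', h2'⟩ := hN n hn
    refine ⟨(A ^ n) (φ0 + (d.sum fun m z => z • u n m)),
      ⟨φ0 + (d.sum fun m z => z • u n m), h1', (hpow n _).symm⟩, h2'⟩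
end

section
/- Fix 1 < p < ∞ with conjugate exponent q (1/p + 1/q = 1). Let b : ℕ → ℂ with 0 < |b_n| < 1 for all n, let a_n = 1 and w_n = 1 for all n (so c_n = b_n − b_{n+1}), and let T : ℓ^p(ℕ) → ℓ^p(ℕ) be a continuous linear operator representing the (unweighted) forward shift F in this setting. Let λ ∈ ℂ with |λ| = 1 and assume ∑_{n=0}^∞ |1 + λ b_n|^q < ∞. Then the formula φ_λ(x) = ∑_{n=0}^∞ x_n (1 + λ b_n) λ^n defines a continuous linear functional on ℓ^p(ℕ) with φ_λ ≠ 0, and the adjoint satisfies T* φ_λ = λ · φ_λ. Consequently, if λ^m = 1 for some m ≥ 1, then φ_λ is a non-trivial periodic vector of T*: (T*)^m φ_λ = φ_λ and φ_λ ≠ 0. -/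
open Filter Finset Topology
open scoped ENNReal NNReal

noncomputable section

/-- Telescoping tsum: if `u (j+1) = w j - w (j+1)`, `u` is summable and `w → 0`,
then `∑' u = u 0 + w 0`. -/
lemma tsum_telescope_of_tendsto (u w : ℕ → ℂ) (hsum : Summable u)
    (hu : ∀ j, u (j + 1) = w j - w (j + 1)) (hw : Tendsto w atTop (𝓝 0)) :
    ∑' j, u j = u 0 + w 0 := by
  have hpart : ∀ N, ∑ j ∈ Finset.range (N + 1), u j = u 0 + w 0 - w N := by
    intro N
    induction N with
    | zero => simp [ContinuousLinearMap.one_def]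
    | succ N ih => rw [Finset.sum_range_succ, ih, hu N]; ring
  have h1 : Tendsto (fun N => ∑ j ∈ Finset.range (N + 1), u j) atTop (𝓝 (u 0 + w 0)) := by
    simp only [hpart]
    simpa using (tendsto_const_nhds (x := u 0 + w 0)).sub hw
  have h2 : Tendsto (fun N => ∑ j ∈ Finset.range (N + 1), u j) atTop (𝓝 (∑' j, u j)) :=
    (hsum.hasSum.tendsto_sum_nat).comp (tendsto_add_atTop_nat 1)
  exact tendsto_nhds_unique h2 h1

/-- **Unimodular eigenvectors and periodic vectors of `F^*`.**  Take `a_n = 1`, `w_n = 1`,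
`0 < |b_n| < 1`, and let `T` represent the unweighted forward shift.  If `|λ| = 1` and
`∑_n |1 + λ b_n|^q < ∞` (with `q` conjugate to `p`), then
`φ_λ(x) = ∑_n x_n (1 + λ b_n) λ^n` is a nonzero continuous linear functional with
`T* φ_λ = λ φ_λ`; in particular if `λ^m = 1` with `m ≥ 1`, then `φ_λ` is a non-trivial
periodic vector of `T*`. -/
theorem adjoint_eigenvector_periodic (p : ℝ≥0∞) [Fact (1 ≤ p)]
    (hp : 1 < p) (hp' : p ≠ ⊤) (q : ℝ) (hq : 1 / p.toReal + 1 / q = 1)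
    (b : ℕ → ℂ) (hb : ∀ n, 0 < ‖b n‖ ∧ ‖b n‖ < 1)
    (T : lp (fun _ : ℕ => ℂ) p →L[ℂ] lp (fun _ : ℕ => ℂ) p)
    (hT : RepresentsFw p (fun _ => 1) b (fun _ => 1) T)
    (lam : ℂ) (hlam : ‖lam‖ = 1)
    (hsum : Summable fun n : ℕ => ‖1 + lam * b n‖ ^ q) :
    ∃ φ : lp (fun _ : ℕ => ℂ) p →L[ℂ] ℂ,
      (∀ x : lp (fun _ : ℕ => ℂ) p,
        φ x = ∑' n : ℕ, (x : ∀ _ : ℕ, ℂ) n * (1 + lam * b n) * lam ^ n) ∧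
      φ ≠ 0 ∧ φ.comp T = lam • φ ∧
      ∀ m : ℕ, 1 ≤ m → lam ^ m = 1 → φ.comp (T ^ m) = φ := by
  classical
  have hpt : 1 < p.toReal := by
    rw [← ENNReal.toReal_one]
    exact (ENNReal.toReal_lt_toReal ENNReal.one_ne_top hp').mpr hp
  have hpq : p.toReal.HolderConjugate q := by
    rw [Real.holderConjugate_iff]
    constructor
    · exact hpt
    · rw [← one_div, ← one_div]; exact hq
  have hq1 : 1 < q := hpq.symm.lt
  set Q : ℝ≥0∞ := ENNReal.ofReal q with hQdef
  have hQt : Q.toReal = q := ENNReal.toReal_ofReal (by linarith)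
  have hpq' : p.toReal.HolderConjugate Q.toReal := by rw [hQt]; exact hpq
  haveI : Fact (1 ≤ Q) := ⟨by
    rw [hQdef, ← ENNReal.ofReal_one]
    exact ENNReal.ofReal_le_ofReal hq1.le⟩
  set g : ℕ → ℂ := fun n => (1 + lam * b n) * lam ^ n with hgdef
  have hnormg : ∀ n, ‖g n‖ = ‖1 + lam * b n‖ := by
    intro n
    simp [hgdef, norm_mul, norm_pow, hlam]
  have hgmem : Memℓp g Q := by
    apply memℓp_gen
    have he : (fun n => ‖g n‖ ^ Q.toReal) = fun n => ‖1 + lam * b n‖ ^ q := by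
      funext n; rw [hnormg n, hQt]
    rw [he]; exact hsum
  set G : lp (fun _ : ℕ => ℂ) Q := ⟨g, hgmem⟩ with hGdef
  have hsummable : ∀ x : lp (fun _ : ℕ => ℂ) p,
      Summable (fun n => (x : ∀ _ : ℕ, ℂ) n * g n) := by
    intro x
    apply Summable.of_norm
    have := lp.summable_mul hpq' x G
    simpa [norm_mul] using this
  set L : lp (fun _ : ℕ => ℂ) p →ₗ[ℂ] ℂ :=
    { toFun := fun x => ∑' n, (x : ∀ _ : ℕ, ℂ) n * g n
      map_add' := by
        intro x y
        show (∑' n, ((x + y : lp (fun _ : ℕ => ℂ) p) : ∀ _ : ℕ, ℂ) n * g n)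
            = (∑' n, (x : ∀ _ : ℕ, ℂ) n * g n) + ∑' n, (y : ∀ _ : ℕ, ℂ) n * g n
        have he : (fun n => ((x + y : lp (fun _ : ℕ => ℂ) p) : ∀ _ : ℕ, ℂ) n * g n)
            = fun n => (x : ∀ _ : ℕ, ℂ) n * g n + (y : ∀ _ : ℕ, ℂ) n * g n := by
          funext n
          rw [lp.coeFn_add, Pi.add_apply, add_mul]
        rw [he]
        exact Summable.tsum_add (hsummable x) (hsummable y)
      map_smul' := by
        intro c x
        show (∑' n, ((c • x : lp (fun _ : ℕ => ℂ) p) : ∀ _ : ℕ, ℂ) n * g n)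
            = c • ∑' n, (x : ∀ _ : ℕ, ℂ) n * g n
        rw [smul_eq_mul, ← tsum_mul_left]
        congr 1
        funext n
        rw [lp.coeFn_smul, Pi.smul_apply, smul_eq_mul]
        ring } with hLdef
  have hLbound : ∀ x : lp (fun _ : ℕ => ℂ) p, ‖L x‖ ≤ ‖G‖ * ‖x‖ := by
    intro x
    have hnorms : Summable fun n => ‖(x : ∀ _ : ℕ, ℂ) n * g n‖ := by
      simpa [norm_mul] using lp.summable_mul hpq' x G
    calc ‖L x‖ = ‖∑' n, (x : ∀ _ : ℕ, ℂ) n * g n‖ := rfl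
      _ ≤ ∑' n, ‖(x : ∀ _ : ℕ, ℂ) n * g n‖ := norm_tsum_le_tsum_norm hnorms
      _ = ∑' n, ‖(x : ∀ _ : ℕ, ℂ) n‖ * ‖(G : ∀ _ : ℕ, ℂ) n‖ := by
          congr 1; funext n; rw [norm_mul]
      _ ≤ ‖x‖ * ‖G‖ := lp.tsum_mul_le_mul_norm' hpq' x G
      _ = ‖G‖ * ‖x‖ := mul_comm _ _
  set φ : lp (fun _ : ℕ => ℂ) p →L[ℂ] ℂ := L.mkContinuous ‖G‖ hLbound with hφdef
  have hφ : ∀ x : lp (fun _ : ℕ => ℂ) p, φ x = ∑' n, (x : ∀ _ : ℕ, ℂ) n * g n :=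
    fun x => rfl
  -- nonvanishing of `g`
  have hlamne : lam ≠ 0 := by
    intro h
    rw [h] at hlam
    simp at hlam
  have hgne : ∀ n, g n ≠ 0 := by
    intro n
    have h1 : (1 : ℂ) + lam * b n ≠ 0 := by
      intro h
      have h2 : lam * b n = -1 := by linear_combination h
      have h3 := congrArg norm h2
      simp [map_mul, hlam] at h3
      exact absurd h3 (ne_of_lt (hb n).2)
    simp only [hgdef]
    exact mul_ne_zero h1 (pow_ne_zero n hlamne)
  have hφsingle : ∀ (n : ℕ) (c : ℂ), φ (lp.single p n c) = c * g n := by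
    intro n c
    rw [hφ]
    rw [tsum_eq_single n ?_]
    · rw [lp.single_apply_self (E := fun _ : ℕ => ℂ) p n c]
    · intro m hm
      rw [lp.single_apply_ne (E := fun _ : ℕ => ℂ) p n c hm, zero_mul]
  have hφne : φ ≠ 0 := by
    intro h
    have h0 := hφsingle 0 1
    rw [h, one_mul] at h0
    simp only [ContinuousLinearMap.zero_apply] at h0
    exact hgne 0 h0.symm
  -- the key computation on basis vectors
  have key : ∀ n : ℕ, φ (T (lp.single p n 1)) = lam * g n := by
    intro n
    set y : lp (fun _ : ℕ => ℂ) p := T (lp.single p n 1) with hydef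
    have hy1 : (y : ∀ _ : ℕ, ℂ) (n + 1) = 1 := by
      have h := hT.1 n
      rw [← hydef] at h
      simpa using h
    have hy2 : ∀ j : ℕ, (y : ∀ _ : ℕ, ℂ) (n + 2 + j) =
        (-1 : ℂ) ^ j * (b n - b (n + 1)) * ∏ k ∈ Finset.range j, b (n + 2 + k) := by
      intro j
      have h := hT.2.1 n (n + 2 + j) (by omega)
      have e1 : n + 2 + j - n = j + 2 := by omega
      rw [e1] at h
      have e3 : j + 2 - 2 = j := by omega
      rw [e3] at h
      rw [← hydef] at h
      have hc : cseq (fun _ => 1) b (fun _ => 1) n = b n - b (n + 1) := by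
        simp [cseq]
      rw [h, hc]
      rw [pow_add]
      norm_num
    have hy3 : ∀ m, m ≤ n → (y : ∀ _ : ℕ, ℂ) m = 0 := fun m hm => by
      have h := hT.2.2 n m hm
      rwa [← hydef] at h
    set t : ℕ → ℂ := fun m => (y : ∀ _ : ℕ, ℂ) m * g m with htdef
    have hts : Summable t := hsummable y
    have hinj : Function.Injective (fun j : ℕ => n + 1 + j) := by
      intro a a' h
      have h' : n + 1 + a = n + 1 + a' := h
      omega
    have hsupp : Function.support t ⊆ Set.range (fun j : ℕ => n + 1 + j) := by
      intro m hm
      rcases le_or_gt m n with h | h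
      · exfalso
        apply hm
        show (y : ∀ _ : ℕ, ℂ) m * g m = 0
        rw [hy3 m h, zero_mul]
      · exact ⟨m - (n + 1), by show n + 1 + (m - (n + 1)) = m; omega⟩
    have hshift : ∑' j, t (n + 1 + j) = ∑' m, t m := hinj.tsum_eq hsupp
    set u : ℕ → ℂ := fun j => t (n + 1 + j) with hudef
    set w : ℕ → ℂ := fun j => (y : ∀ _ : ℕ, ℂ) (n + 2 + j) * lam ^ (n + 2 + j) with hwdef
    have husum : Summable u := hts.comp_injective hinj
    have hu0 : u 0 = g (n + 1) := by
      show t (n + 1 + 0) = g (n + 1)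
      show (y : ∀ _ : ℕ, ℂ) (n + 1 + 0) * g (n + 1 + 0) = g (n + 1)
      norm_num [hy1]
    have hurec : ∀ j, u (j + 1) = w j - w (j + 1) := by
      intro j
      have e : n + 1 + (j + 1) = n + 2 + j := by omega
      have e2 : n + 2 + (j + 1) = n + 2 + j + 1 := by omega
      have h1 := hy2 j
      have h2 := hy2 (j + 1)
      rw [e2] at h2
      show t (n + 1 + (j + 1)) = w j - w (j + 1)
      show (y : ∀ _ : ℕ, ℂ) (n + 1 + (j + 1)) * g (n + 1 + (j + 1))
          = (y : ∀ _ : ℕ, ℂ) (n + 2 + j) * lam ^ (n + 2 + j)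
            - (y : ∀ _ : ℕ, ℂ) (n + 2 + (j + 1)) * lam ^ (n + 2 + (j + 1))
      rw [e, e2]
      rw [h1, h2, Finset.prod_range_succ, pow_succ (-1 : ℂ) j, pow_succ lam (n + 2 + j)]
      simp only [hgdef]
      ring
    have hwtend : Tendsto w atTop (𝓝 0) := by
      have hyp : Summable (fun m => ‖(y : ∀ _ : ℕ, ℂ) m‖ ^ p.toReal) :=
        (lp.memℓp y).summable (lt_trans zero_lt_one hpt)
      have h3 : Tendsto (fun m => ‖(y : ∀ _ : ℕ, ℂ) m‖ ^ p.toReal) atTop (𝓝 0) :=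
        hyp.tendsto_atTop_zero
      have hptne : p.toReal ≠ 0 := by positivity
      have h4 : Tendsto (fun m => ‖(y : ∀ _ : ℕ, ℂ) m‖) atTop (𝓝 0) := by
        have h5 := h3.rpow_const (p := p.toReal⁻¹) (Or.inr (by positivity))
        rw [Real.zero_rpow (inv_ne_zero hptne)] at h5
        refine h5.congr fun m => ?_
        exact Real.rpow_rpow_inv (norm_nonneg _) hptne
      have h6 : Tendsto (fun j : ℕ => n + 2 + j) atTop atTop := by
        refine tendsto_atTop_atTop_of_monotone (fun a b hab => by omega) (fun x => ⟨x, by omega⟩)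
      rw [tendsto_zero_iff_norm_tendsto_zero]
      refine (h4.comp h6).congr fun j => ?_
      show ‖(y : ∀ _ : ℕ, ℂ) (n + 2 + j)‖ = ‖w j‖
      show ‖(y : ∀ _ : ℕ, ℂ) (n + 2 + j)‖ = ‖(y : ∀ _ : ℕ, ℂ) (n + 2 + j) * lam ^ (n + 2 + j)‖
      rw [norm_mul]
      have hl : ‖lam ^ (n + 2 + j)‖ = 1 := by
        rw [norm_pow, hlam, one_pow]
      rw [hl, mul_one]
    have hval : ∑' j, u j = u 0 + w 0 := tsum_telescope_of_tendsto u w husum hurec hwtend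
    have hw0 : w 0 = (b n - b (n + 1)) * lam ^ (n + 2) := by
      show (y : ∀ _ : ℕ, ℂ) (n + 2 + 0) * lam ^ (n + 2 + 0) = (b n - b (n + 1)) * lam ^ (n + 2)
      rw [hy2 0]
      simp
    have hφy : φ y = ∑' m, t m := hφ y
    rw [hφy, ← hshift]
    rw [show (∑' j, t (n + 1 + j)) = ∑' j, u j from rfl, hval, hu0, hw0]
    simp only [hgdef]
    ring
  -- eigenvalue equation
  have heig : φ.comp T = lam • φ := by
    ext x
    rw [ContinuousLinearMap.comp_apply, ContinuousLinearMap.smul_apply, smul_eq_mul]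
    have hx : HasSum (fun n => lp.single p n ((x : ∀ _ : ℕ, ℂ) n)) x := lp.hasSum_single hp' x
    have h1 : HasSum (fun n => φ (T (lp.single p n ((x : ∀ _ : ℕ, ℂ) n)))) (φ (T x)) := by
      have h := hx.mapL (φ.comp T)
      simpa [ContinuousLinearMap.comp_apply] using h
    have h2 : ∀ n, φ (T (lp.single p n ((x : ∀ _ : ℕ, ℂ) n)))
        = lam * ((x : ∀ _ : ℕ, ℂ) n * g n) := by
      intro n
      have hsing : lp.single p n ((x : ∀ _ : ℕ, ℂ) n)
          = (x : ∀ _ : ℕ, ℂ) n • lp.single (E := fun _ : ℕ => ℂ) p n (1 : ℂ) := by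
        rw [← lp.single_smul]
        congr 1
        simp
      rw [hsing, map_smul, map_smul, smul_eq_mul, key n]
      ring
    have h3 : HasSum (fun n => lam * ((x : ∀ _ : ℕ, ℂ) n * g n)) (φ (T x)) :=
      h1.congr_fun fun n => (h2 n).symm
    have h4 : HasSum (fun n => (x : ∀ _ : ℕ, ℂ) n * g n) (φ x) := by
      rw [hφ x]
      exact (hsummable x).hasSum
    exact h3.unique (h4.mul_left lam)
  -- powers
  have hpows : ∀ m : ℕ, φ.comp (T ^ m) = lam ^ m • φ := by
    intro m
    induction m with
    | zero => simp [ContinuousLinearMap.one_def]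
    | succ m ih =>
      rw [pow_succ, ContinuousLinearMap.mul_def, ← ContinuousLinearMap.comp_assoc, ih,
        ContinuousLinearMap.smul_comp, heig, smul_smul, ← pow_succ]
  refine ⟨φ, ?_, hφne, heig, ?_⟩
  · intro x
    rw [hφ x]
    exact tsum_congr fun n => by simp only [hgdef]; ring
  · intro m hm hlm
    rw [hpows m, hlm, one_smul]
end
end

section
/- Fix 1 ≤ p < ∞ and let B : ℓ^p(ℕ) → ℓ^p(ℕ) be the backward shift, the continuous linear operator with (Bx)_n = x_{n+1} for all x and n. Let λ ∈ ℂ with |λ| = 1 and let K_λ : ℓ^p(ℕ) → ℓ^p(ℕ) be the rank-one operator K_λ(x) = (λ x_0) e_0. Then: (a) (B + K_λ) e_0 = λ e_0, so e_0 is an eigenvector of B + K_λ with unimodular eigenvalue λ; in particular, if λ^m = 1 for some m ≥ 1 then (B + K_λ)^m e_0 = e_0, i.e. e_0 is a non-trivial periodic vector of B + K_λ; and (b) B + K_λ is not hypercyclic: there is no x ∈ ℓ^p(ℕ) whose orbit {(B + K_λ)^n x : n ∈ ℕ} is dense in ℓ^p(ℕ). -/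
open Filter Topology
open scoped ENNReal

/-- **A rank-one perturbation of the backward shift with periodic vectors but no
hypercyclic vectors.**  Let `B` be the backward shift on `ℓ^p(ℕ)` and, for `|λ| = 1`, let
`K_λ(x) = (λ x_0)·e_0`.  Then `(B + K_λ) e_0 = λ e_0`; if `λ^m = 1` with `m ≥ 1` then
`e_0` is a non-trivial periodic vector of `B + K_λ`; and `B + K_λ` is not hypercyclic. -/
theorem backward_shift_rank_one_perturbation (p : ℝ≥0∞) [Fact (1 ≤ p)] (hp' : p ≠ ⊤)
    (B : lp (fun _ : ℕ => ℂ) p →L[ℂ] lp (fun _ : ℕ => ℂ) p)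
    (hB : ∀ (x : lp (fun _ : ℕ => ℂ) p) (n : ℕ),
      (B x : ∀ _ : ℕ, ℂ) n = (x : ∀ _ : ℕ, ℂ) (n + 1))
    (lam : ℂ) (hlam : ‖lam‖ = 1)
    (K : lp (fun _ : ℕ => ℂ) p →L[ℂ] lp (fun _ : ℕ => ℂ) p)
    (hK : ∀ x : lp (fun _ : ℕ => ℂ) p,
      K x = (lam * (x : ∀ _ : ℕ, ℂ) 0) • lp.single p 0 (1 : ℂ)) :
    (B + K) (lp.single p 0 (1 : ℂ)) = lam • lp.single p 0 (1 : ℂ) ∧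
    (∀ m : ℕ, 1 ≤ m → lam ^ m = 1 →
      ((B + K) ^ m) (lp.single p 0 (1 : ℂ)) = lp.single p 0 (1 : ℂ)) ∧
    ¬ ∃ x : lp (fun _ : ℕ => ℂ) p,
        Dense (Set.range fun n : ℕ => ((B + K) ^ n) x) := by
  have hp0 : p ≠ 0 := by
    have h1 : (1 : ℝ≥0∞) ≤ p := Fact.out
    intro h; rw [h] at h1; exact (by norm_num : ¬ (1:ℝ≥0∞) ≤ 0) h1
  have hBe0 : B (lp.single p 0 (1 : ℂ)) = 0 := by
    apply lp.ext
    funext n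
    rw [hB, lp.single_apply_ne (E := fun _ : ℕ => ℂ) p 0 1 (by omega : n + 1 ≠ 0)]
    simp
  have hKe0 : K (lp.single p 0 (1 : ℂ)) = lam • lp.single p 0 (1 : ℂ) := by
    rw [hK, lp.single_apply_self, mul_one]
  have ha : (B + K) (lp.single p 0 (1 : ℂ)) = lam • lp.single p 0 (1 : ℂ) := by
    rw [ContinuousLinearMap.add_apply, hBe0, hKe0, zero_add]
  refine ⟨ha, ?_, ?_⟩
  · have key : ∀ m : ℕ, ((B + K) ^ m) (lp.single p 0 (1 : ℂ))
        = lam ^ m • lp.single p 0 (1 : ℂ) := by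
      intro m
      induction m with
      | zero => simp
      | succ n ih =>
        rw [pow_succ, ContinuousLinearMap.mul_apply, ha, map_smul, ih, smul_smul,
          ← pow_succ']
    intro m _ hm
    rw [key m, hm, one_smul]
  · rintro ⟨x, hx⟩
    set T := B + K with hT
    have hTcoord : ∀ (y : lp (fun _ : ℕ => ℂ) p) (k : ℕ), 1 ≤ k →
        (T y : ∀ _ : ℕ, ℂ) k = (y : ∀ _ : ℕ, ℂ) (k + 1) := by
      intro y k hk
      have h1 : T y = B y + K y := ContinuousLinearMap.add_apply B K y
      rw [h1, lp.coeFn_add, Pi.add_apply, hB, hK y, lp.coeFn_smul, Pi.smul_apply,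
        lp.single_apply_ne (E := fun _ : ℕ => ℂ) p 0 1 (by omega : k ≠ 0), smul_zero, add_zero]
    have horb : ∀ n : ℕ, ∀ k : ℕ, 1 ≤ k →
        ((T ^ n) x : ∀ _ : ℕ, ℂ) k = (x : ∀ _ : ℕ, ℂ) (k + n) := by
      intro n
      induction n with
      | zero => intro k _; simp
      | succ n ih =>
        intro k hk
        rw [pow_succ', ContinuousLinearMap.mul_apply, hTcoord _ k hk,
          ih (k + 1) (by omega)]
        have hkn : k + 1 + n = k + (n + 1) := by omega
        rw [hkn]
    have hev : Continuous (fun y : lp (fun _ : ℕ => ℂ) p => (y : ∀ _ : ℕ, ℂ) 1) := by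
      apply LipschitzWith.continuous (K := 1)
      intro y z
      rw [edist_dist, edist_dist, dist_eq_norm, dist_eq_norm]
      have h1 : ((y - z : lp (fun _ : ℕ => ℂ) p) : ∀ _ : ℕ, ℂ) 1
          = (y : ∀ _ : ℕ, ℂ) 1 - (z : ∀ _ : ℕ, ℂ) 1 := by
        rw [lp.coeFn_sub]; rfl
      have h2 := lp.norm_apply_le_norm hp0 (y - z) 1
      rw [h1] at h2
      simp only [ENNReal.coe_one, one_mul]
      exact ENNReal.ofReal_le_ofReal h2
    have himg : ∀ n : ℕ, (((T ^ n) x : lp (fun _ : ℕ => ℂ) p) : ∀ _ : ℕ, ℂ) 1 ∈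
        Metric.closedBall (0 : ℂ) ‖x‖ := by
      intro n
      rw [Metric.mem_closedBall, dist_zero_right, horb n 1 le_rfl]
      exact lp.norm_apply_le_norm hp0 x (1 + n)
    have hsurj : Function.Surjective (fun y : lp (fun _ : ℕ => ℂ) p => (y : ∀ _ : ℕ, ℂ) 1) := by
      intro c
      exact ⟨lp.single p 1 c, lp.single_apply_self (E := fun _ : ℕ => ℂ) p 1 c⟩
    have hdense : Dense ((fun y : lp (fun _ : ℕ => ℂ) p => (y : ∀ _ : ℕ, ℂ) 1) ''
        Set.range fun n : ℕ => ((T ^ n) x)) :=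
      hsurj.denseRange.dense_image hev hx
    have hball : ((fun y : lp (fun _ : ℕ => ℂ) p => (y : ∀ _ : ℕ, ℂ) 1) ''
        Set.range fun n : ℕ => ((T ^ n) x)) ⊆ Metric.closedBall (0 : ℂ) ‖x‖ := by
      rintro c ⟨y, ⟨n, rfl⟩, rfl⟩
      exact himg n
    have hcl : (Set.univ : Set ℂ) ⊆ Metric.closedBall (0 : ℂ) ‖x‖ := by
      rw [← hdense.closure_eq]
      exact closure_minimal hball Metric.isClosed_closedBall
    have hmem := hcl (Set.mem_univ ((‖x‖ + 1 : ℝ) : ℂ))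
    rw [Metric.mem_closedBall, dist_zero_right] at hmem
    have h2 : ‖((‖x‖ + 1 : ℝ) : ℂ)‖ = ‖x‖ + 1 := by
      rw [Complex.norm_real, Real.norm_eq_abs, abs_of_nonneg (by positivity)]
    rw [h2] at hmem
    linarith
end
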